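/- arXiv:1907.05064 — 11 statements merged into one kernel-verified Lean document; each statement's English description precedes it below -/
import Mathlib

section
/- Define c : ℕ → ℕ by c(1) = 0, c(2n) = 2·c(n), and c(2n+1) = c(n+1) + c(n) + 1 for n ≥ 1. Then for all m ≥ 1 and all s ≥ 0, c(m+s) + c(m) + s ≥ c(2m+s). -/
theorem minColless_superadditive (c : ℕ → ℕ) (h1 : c 1 = 0)
    (heven : ∀ n : ℕ, 1 ≤ n → c (2 * n) = 2 * c n)
    (hodd : ∀ n : ℕ, 1 ≤ n → c (2 * n + 1) = c (n + 1) + c n + 1) :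
    ∀ m : ℕ, 1 ≤ m → ∀ s : ℕ, c (m + s) + c m + s ≥ c (2 * m + s) := by
  suffices h : ∀ N m s, 1 ≤ m → 2 * m + s ≤ N → c (2 * m + s) ≤ c (m + s) + c m + s by
    intro m hm s
    exact h (2 * m + s) m s hm le_rfl
  intro N
  induction N with
  | zero => intro m s hm hle; omega
  | succ N ih =>
    intro m s hm hle
    rcases Nat.eq_zero_or_pos s with hs | hs
    · subst hs
      have h2 := heven m hm
      simp only [Nat.add_zero]
      omega
    rcases Nat.even_or_odd m with ⟨x, hx⟩ | ⟨x, hx⟩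
    · -- m = x + x, x ≥ 1
      have hx1 : 1 ≤ x := by omega
      rcases Nat.even_or_odd s with ⟨t, ht⟩ | ⟨t, ht⟩
      · -- s = t + t, t ≥ 1
        rw [show 2 * m + s = 2 * (2 * x + t) by omega,
            show m + s = 2 * (x + t) by omega,
            show m = 2 * x by omega]
        rw [heven (2 * x + t) (by omega), heven (x + t) (by omega), heven x hx1]
        have IH1 := ih x t hx1 (by omega)
        omega
      · -- s = 2t + 1
        rw [show 2 * m + s = 2 * (2 * x + t) + 1 by omega,
            show m + s = 2 * (x + t) + 1 by omega,
            show m = 2 * x by omega]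
        rw [hodd (2 * x + t) (by omega), hodd (x + t) (by omega), heven x hx1]
        have IH1 := ih x (t + 1) hx1 (by omega)
        rw [show 2 * x + (t + 1) = 2 * x + t + 1 by omega,
            show x + (t + 1) = x + t + 1 by omega] at IH1
        have IH2 := ih x t hx1 (by omega)
        omega
    · -- m = 2x + 1
      rcases Nat.even_or_odd s with ⟨t, ht⟩ | ⟨t, ht⟩
      · -- s = t + t, t ≥ 1
        rcases Nat.eq_zero_or_pos x with hx0 | hx0
        · -- m = 1
          rw [show 2 * m + s = 2 * (t + 1) by omega,
              show m + s = 2 * t + 1 by omega,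
              show m = 1 by omega]
          rw [heven (t + 1) (by omega), hodd t (by omega)]
          have IH1 := ih 1 (t - 1) le_rfl (by omega)
          rw [show 2 * 1 + (t - 1) = t + 1 by omega,
              show 1 + (t - 1) = t by omega] at IH1
          omega
        · rw [show 2 * m + s = 2 * (2 * x + t + 1) by omega,
              show m + s = 2 * (x + t) + 1 by omega,
              show m = 2 * x + 1 by omega]
          rw [heven (2 * x + t + 1) (by omega), hodd (x + t) (by omega), hodd x (by omega)]
          have IH1 := ih (x + 1) (t - 1) (by omega) (by omega)
          rw [show 2 * (x + 1) + (t - 1) = 2 * x + t + 1 by omega,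
              show x + 1 + (t - 1) = x + t by omega] at IH1
          have IH2 := ih x (t + 1) hx0 (by omega)
          rw [show 2 * x + (t + 1) = 2 * x + t + 1 by omega,
              show x + (t + 1) = x + t + 1 by omega] at IH2
          omega
      · -- s = 2t + 1
        rcases Nat.eq_zero_or_pos x with hx0 | hx0
        · -- m = 1
          rw [show 2 * m + s = 2 * (t + 1) + 1 by omega,
              show m + s = 2 * (t + 1) by omega,
              show m = 1 by omega]
          rw [hodd (t + 1) (by omega), heven (t + 1) (by omega)]
          have IH1 := ih 1 t le_rfl (by omega)
          rw [show 2 * 1 + t = t + 1 + 1 by omega,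
              show (1 : ℕ) + t = t + 1 by omega] at IH1
          omega
        · rw [show 2 * m + s = 2 * (2 * x + t + 1) + 1 by omega,
              show m + s = 2 * (x + t + 1) by omega,
              show m = 2 * x + 1 by omega]
          rw [hodd (2 * x + t + 1) (by omega), heven (x + t + 1) (by omega),
              hodd x (by omega)]
          have IH1 := ih (x + 1) t (by omega) (by omega)
          rw [show 2 * (x + 1) + t = 2 * x + t + 1 + 1 by omega,
              show x + 1 + t = x + t + 1 by omega] at IH1
          have IH2 := ih x (t + 1) hx0 (by omega)
          rw [show 2 * x + (t + 1) = 2 * x + t + 1 by omega,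
              show x + (t + 1) = x + t + 1 by omega] at IH2
          omega
end

section
/- Define c : ℕ → ℕ by c(1) = 0, c(2n) = 2·c(n), c(2n+1) = c(n+1) + c(n) + 1. Then for all s ∈ ℕ, c(1+s) + s > c(2+s) if and only if s > 1. -/
theorem minColless_strict_iff (c : ℕ → ℕ) (h1 : c 1 = 0)
    (heven : ∀ n : ℕ, 1 ≤ n → c (2 * n) = 2 * c n)
    (hodd : ∀ n : ℕ, 1 ≤ n → c (2 * n + 1) = c (n + 1) + c n + 1) :
    ∀ s : ℕ, c (1 + s) + s > c (2 + s) ↔ 1 < s := by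
  have size2 : ∀ m : ℕ, 1 ≤ m → (2*m).size = m.size + 1 := by
    intro m hm
    have := Nat.size_bit (b := false) (n := m) (by simp [Nat.bit]; omega)
    simpa [Nat.bit] using this
  have size21 : ∀ m : ℕ, (2*m+1).size = m.size + 1 := by
    intro m
    have := Nat.size_bit (b := true) (n := m) (by simp [Nat.bit])
    simpa [Nat.bit, two_mul] using this
  have key : ∀ n : ℕ, 1 ≤ n → c (n+1) + 1 ≤ c n + Nat.size n := by
    intro n
    induction n using Nat.strong_induction_on with
    | _ n ih =>
      intro hn
      rcases Nat.even_or_odd n with ⟨m, hm⟩ | ⟨m, hm⟩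
      · -- n = 2m, m ≥ 1
        have hm1 : 1 ≤ m := by omega
        have hn2 : n = 2*m := by omega
        subst hn2
        have h1' := ih m (by omega) hm1
        rw [hodd m hm1, heven m hm1, size2 m hm1]
        omega
      · rcases Nat.eq_zero_or_pos m with hm0 | hm1
        · subst hm0
          have hn1 : n = 1 := by omega
          subst hn1
          have : c 2 = 2 * c 1 := heven 1 le_rfl
          simp [Nat.size] at *
          omega
        · have hn2 : n = 2*m+1 := by omega
          subst hn2
          have h1' := ih m (by omega) hm1
          have e1 : 2*m+1+1 = 2*(m+1) := by ring
          rw [e1, heven (m+1) (by omega), hodd m hm1, size21 m]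
          omega
  intro s
  constructor
  · intro h
    by_contra hs
    interval_cases s
    · have h2 : c 2 = 2 * c 1 := heven 1 le_rfl
      simp only [show (1:ℕ)+0 = 1 from rfl, show (2:ℕ)+0 = 2 from rfl] at h
      omega
    · have h2 : c 2 = 2 * c 1 := heven 1 le_rfl
      have h3 : c 3 = c 2 + c 1 + 1 := hodd 1 le_rfl
      simp only [show (1:ℕ)+1 = 2 from rfl, show (2:ℕ)+1 = 3 from rfl] at h
      omega
  · intro hs
    have hk := key (s+1) (by omega)
    have pow : ∀ t : ℕ, 2 ≤ t → t + 1 < 2^t := by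
      intro t ht
      induction t with
      | zero => omega
      | succ u ihu =>
        rcases Nat.lt_or_ge u 2 with hu | hu
        · interval_cases u
          · omega
          · norm_num
        · have := ihu hu
          rw [pow_succ]
          omega
    have hsize : (s+1).size ≤ s := by
      rw [Nat.size_le]
      exact pow s hs
    have e1 : 1 + s = s + 1 := by omega
    have e2 : 2 + s = s + 1 + 1 := by omega
    rw [e1, e2]
    omega
end

section
/- Define c : ℕ → ℕ by c(1) = 0, c(2n) = 2·c(n), c(2n+1) = c(n+1) + c(n) + 1. If m ≥ 1 is odd and s ≥ 2 is even, then c(m+s) + c(m) + s > c(2m+s). -/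
/-- Subadditivity-type lemma: `c (a+b) ≤ c a + c b + (b - a)` for `1 ≤ a ≤ b`. -/
theorem minColless_aux_H (c : ℕ → ℕ) (h1 : c 1 = 0)
    (heven : ∀ n : ℕ, 1 ≤ n → c (2 * n) = 2 * c n)
    (hodd : ∀ n : ℕ, 1 ≤ n → c (2 * n + 1) = c (n + 1) + c n + 1) :
    ∀ n a b : ℕ, 1 ≤ a → a ≤ b → a + b ≤ n → c (a + b) ≤ c a + c b + (b - a) := by
  intro n
  induction n with
  | zero => intro a b ha hab hn; omega
  | succ n ih =>
    intro a b ha hab hn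
    rcases Nat.even_or_odd a with ⟨a', rfl⟩ | ⟨a', rfl⟩ <;>
      rcases Nat.even_or_odd b with ⟨b', rfl⟩ | ⟨b', rfl⟩
    · -- a even, b even
      have g1 : c (a' + a' + (b' + b')) = 2 * c (a' + b') := by
        rw [show a' + a' + (b' + b') = 2 * (a' + b') by ring]
        exact heven _ (by omega)
      have g2 : c (a' + a') = 2 * c a' := by
        rw [show a' + a' = 2 * a' by ring]; exact heven _ (by omega)
      have g3 : c (b' + b') = 2 * c b' := by
        rw [show b' + b' = 2 * b' by ring]; exact heven _ (by omega)
      have i1 := ih a' b' (by omega) (by omega) (by omega)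
      omega
    · -- a even, b odd
      have g1 : c (a' + a' + (2 * b' + 1)) = c (a' + b' + 1) + c (a' + b') + 1 := by
        rw [show a' + a' + (2 * b' + 1) = 2 * (a' + b') + 1 by ring,
          hodd _ (by omega)]
      have g2 : c (a' + a') = 2 * c a' := by
        rw [show a' + a' = 2 * a' by ring]; exact heven _ (by omega)
      have g3 : c (2 * b' + 1) = c (b' + 1) + c b' + 1 := hodd _ (by omega)
      have i1 := ih a' (b' + 1) (by omega) (by omega) (by omega)
      rw [show a' + (b' + 1) = a' + b' + 1 by ring] at i1
      have i2 := ih a' b' (by omega) (by omega) (by omega)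
      omega
    · -- a odd, b even
      have g3 : c (b' + b') = 2 * c b' := by
        rw [show b' + b' = 2 * b' by ring]; exact heven _ (by omega)
      by_cases h0 : a' = 0
      · subst h0
        have g1 : c (2 * 0 + 1 + (b' + b')) = c (b' + 1) + c b' + 1 := by
          rw [show 2 * 0 + 1 + (b' + b') = 2 * b' + 1 by ring, hodd _ (by omega)]
        have g2 : c (2 * 0 + 1) = 0 := by norm_num [h1]
        have i1 := ih 1 b' (by omega) (by omega) (by omega)
        rw [show 1 + b' = b' + 1 by ring] at i1
        omega
      · have g1 : c (2 * a' + 1 + (b' + b')) = c (a' + b' + 1) + c (a' + b') + 1 := by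
          rw [show 2 * a' + 1 + (b' + b') = 2 * (a' + b') + 1 by ring,
            hodd _ (by omega)]
        have g2 : c (2 * a' + 1) = c (a' + 1) + c a' + 1 := hodd _ (by omega)
        have i1 := ih (a' + 1) b' (by omega) (by omega) (by omega)
        rw [show a' + 1 + b' = a' + b' + 1 by ring] at i1
        have i2 := ih a' b' (by omega) (by omega) (by omega)
        omega
    · -- a odd, b odd
      by_cases hb0 : b' = 0
      · have ha0 : a' = 0 := by omega
        subst ha0; subst hb0
        have g1 : c (2 * 0 + 1 + (2 * 0 + 1)) = 2 * c 1 := by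
          rw [show 2 * 0 + 1 + (2 * 0 + 1) = 2 * 1 by ring]
          exact heven _ (by omega)
        omega
      · by_cases ha0 : a' = 0
        · subst ha0
          have g1 : c (2 * 0 + 1 + (2 * b' + 1)) = 2 * c (b' + 1) := by
            rw [show 2 * 0 + 1 + (2 * b' + 1) = 2 * (b' + 1) by ring]
            exact heven _ (by omega)
          have g2 : c (2 * 0 + 1) = 0 := by norm_num [h1]
          have g3 : c (2 * b' + 1) = c (b' + 1) + c b' + 1 := hodd _ (by omega)
          have i1 := ih 1 b' (by omega) (by omega) (by omega)
          rw [show 1 + b' = b' + 1 by ring] at i1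
          omega
        · have g2 : c (2 * a' + 1) = c (a' + 1) + c a' + 1 := hodd _ (by omega)
          rcases Nat.lt_or_ge a' b' with hlt | hge
          · have g1 : c (2 * a' + 1 + (2 * b' + 1)) = 2 * c (a' + b' + 1) := by
              rw [show 2 * a' + 1 + (2 * b' + 1) = 2 * (a' + b' + 1) by ring]
              exact heven _ (by omega)
            have g3 : c (2 * b' + 1) = c (b' + 1) + c b' + 1 := hodd _ (by omega)
            have i1 := ih a' (b' + 1) (by omega) (by omega) (by omega)
            rw [show a' + (b' + 1) = a' + b' + 1 by ring] at i1
            have i2 := ih (a' + 1) b' (by omega) (by omega) (by omega)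
            rw [show a' + 1 + b' = a' + b' + 1 by ring] at i2
            omega
          · have hab' : a' = b' := by omega
            subst hab'
            have g1 : c (2 * a' + 1 + (2 * a' + 1)) = 2 * c (a' + a' + 1) := by
              rw [show 2 * a' + 1 + (2 * a' + 1) = 2 * (a' + a' + 1) by ring]
              exact heven _ (by omega)
            have i1 := ih a' (a' + 1) (by omega) (by omega) (by omega)
            rw [show a' + (a' + 1) = a' + a' + 1 by ring] at i1
            omega

/-- Strict version for odd `m`: `2*c(m+d) + 1 ≤ c(m+2d) + c m + 2d`. -/
theorem minColless_aux_A (c : ℕ → ℕ) (h1 : c 1 = 0)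
    (heven : ∀ n : ℕ, 1 ≤ n → c (2 * n) = 2 * c n)
    (hodd : ∀ n : ℕ, 1 ≤ n → c (2 * n + 1) = c (n + 1) + c n + 1) :
    ∀ N d m : ℕ, 1 ≤ d → d ≤ N → Odd m →
      2 * c (m + d) + 1 ≤ c (m + 2 * d) + c m + 2 * d := by
  have H := minColless_aux_H c h1 heven hodd
  intro N
  induction N with
  | zero => intro d m hd hdN _; omega
  | succ N ih =>
    intro d m hd hdN hm
    obtain ⟨k, rfl⟩ := hm
    rcases Nat.even_or_odd d with ⟨e, rfl⟩ | ⟨e, rfl⟩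
    · -- d = e + e, e ≥ 1
      by_cases hk0 : k = 0
      · subst hk0
        have g1 : c (2 * 0 + 1 + (e + e)) = c (e + 1) + c e + 1 := by
          rw [show 2 * 0 + 1 + (e + e) = 2 * e + 1 by ring, hodd _ (by omega)]
        have g2 : c (2 * 0 + 1 + 2 * (e + e)) = c (2 * e + 1) + c (2 * e) + 1 := by
          rw [show 2 * 0 + 1 + 2 * (e + e) = 2 * (2 * e) + 1 by ring,
            hodd _ (by omega)]
        have g3 : c (2 * e + 1) = c (e + 1) + c e + 1 := hodd _ (by omega)
        have g4 : c (2 * e) = 2 * c e := heven _ (by omega)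
        have g5 : c (2 * 0 + 1) = 0 := by norm_num [h1]
        have i1 := H (1 + e) 1 e (by omega) (by omega) (by omega)
        rw [show 1 + e = e + 1 by ring] at i1
        omega
      · have g1 : c (2 * k + 1 + (e + e)) = c (k + e + 1) + c (k + e) + 1 := by
          rw [show 2 * k + 1 + (e + e) = 2 * (k + e) + 1 by ring, hodd _ (by omega)]
        have g2 : c (2 * k + 1 + 2 * (e + e)) = c (k + 2 * e + 1) + c (k + 2 * e) + 1 := by
          rw [show 2 * k + 1 + 2 * (e + e) = 2 * (k + 2 * e) + 1 by ring,
            hodd _ (by omega)]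
        have g3 : c (2 * k + 1) = c (k + 1) + c k + 1 := hodd _ (by omega)
        rcases Nat.even_or_odd k with hke | hko
        · -- k even, k+1 odd: use IH at (e, k+1), H at (k, k+2e)
          have iA := ih e (k + 1) (by omega) (by omega) hke.add_one
          rw [show k + 1 + e = k + e + 1 by ring,
            show k + 1 + 2 * e = k + 2 * e + 1 by ring] at iA
          have Ha := H (k + (k + 2 * e)) k (k + 2 * e) (by omega) (by omega) le_rfl
          rw [show k + (k + 2 * e) = 2 * (k + e) by ring,
            heven (k + e) (by omega)] at Ha
          omega
        · -- k odd: use IH at (e, k), H at (k+1, k+2e+1)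
          have iA := ih e k (by omega) (by omega) hko
          have Ha := H (k + 1 + (k + 2 * e + 1)) (k + 1) (k + 2 * e + 1)
            (by omega) (by omega) le_rfl
          rw [show k + 1 + (k + 2 * e + 1) = 2 * (k + e + 1) by ring,
            heven (k + e + 1) (by omega)] at Ha
          omega
    · -- d = 2e + 1
      by_cases hk0 : k = 0
      · subst hk0
        by_cases he0 : e = 0
        · subst he0
          have g1 : c (2 * 0 + 1 + (2 * 0 + 1)) = 2 * c 1 := by
            rw [show 2 * 0 + 1 + (2 * 0 + 1) = 2 * 1 by ring]
            exact heven _ (by omega)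
          have g2 : c (2 * 0 + 1 + 2 * (2 * 0 + 1)) = c (1 + 1) + c 1 + 1 := by
            rw [show 2 * 0 + 1 + 2 * (2 * 0 + 1) = 2 * 1 + 1 by ring,
              hodd _ (by omega)]
          have g3 : c (1 + 1) = 2 * c 1 := by
            rw [show (1 + 1 : ℕ) = 2 * 1 by ring]; exact heven _ (by omega)
          omega
        · have g1 : c (2 * 0 + 1 + (2 * e + 1)) = 2 * c (e + 1) := by
            rw [show 2 * 0 + 1 + (2 * e + 1) = 2 * (e + 1) by ring]
            exact heven _ (by omega)
          have g2 : c (2 * 0 + 1 + 2 * (2 * e + 1)) = c (2 * (e + 1)) + c (2 * e + 1) + 1 := by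
            rw [show 2 * 0 + 1 + 2 * (2 * e + 1) = 2 * (2 * e + 1) + 1 by ring,
              hodd _ (by omega), show 2 * e + 1 + 1 = 2 * (e + 1) by ring]
          have g3 : c (2 * (e + 1)) = 2 * c (e + 1) := heven _ (by omega)
          have g4 : c (2 * e + 1) = c (e + 1) + c e + 1 := hodd _ (by omega)
          have g5 : c (2 * 0 + 1) = 0 := by norm_num [h1]
          have i1 := H (1 + e) 1 e (by omega) (by omega) (by omega)
          rw [show 1 + e = e + 1 by ring] at i1
          omega
      · have g1 : c (2 * k + 1 + (2 * e + 1)) = 2 * c (k + e + 1) := by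
          rw [show 2 * k + 1 + (2 * e + 1) = 2 * (k + e + 1) by ring]
          exact heven _ (by omega)
        have g2 : c (2 * k + 1 + 2 * (2 * e + 1)) =
            c (k + 2 * e + 2) + c (k + 2 * e + 1) + 1 := by
          rw [show 2 * k + 1 + 2 * (2 * e + 1) = 2 * (k + 2 * e + 1) + 1 by ring,
            hodd _ (by omega), show k + 2 * e + 1 + 1 = k + 2 * e + 2 by ring]
        have g3 : c (2 * k + 1) = c (k + 1) + c k + 1 := hodd _ (by omega)
        have Ha := H (k + (k + 2 * e + 2)) k (k + 2 * e + 2) (by omega) (by omega) le_rfl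
        rw [show k + (k + 2 * e + 2) = 2 * (k + e + 1) by ring,
          heven (k + e + 1) (by omega)] at Ha
        have Hb := H (k + 1 + (k + 2 * e + 1)) (k + 1) (k + 2 * e + 1)
          (by omega) (by omega) le_rfl
        rw [show k + 1 + (k + 2 * e + 1) = 2 * (k + e + 1) by ring,
          heven (k + e + 1) (by omega)] at Hb
        omega

theorem minColless_strict_of_odd_even (c : ℕ → ℕ) (h1 : c 1 = 0)
    (heven : ∀ n : ℕ, 1 ≤ n → c (2 * n) = 2 * c n)
    (hodd : ∀ n : ℕ, 1 ≤ n → c (2 * n + 1) = c (n + 1) + c n + 1) :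
    ∀ m s : ℕ, 1 ≤ m → Odd m → 2 ≤ s → Even s →
      c (m + s) + c m + s > c (2 * m + s) := by
  intro m s hm hmodd hs hseven
  obtain ⟨d, rfl⟩ := hseven
  have g : c (2 * m + (d + d)) = 2 * c (m + d) := by
    rw [show 2 * m + (d + d) = 2 * (m + d) by ring]
    exact heven _ (by omega)
  have A := minColless_aux_A c h1 heven hodd d d m (by omega) le_rfl hmodd
  rw [show m + 2 * d = m + (d + d) by ring] at A
  omega
end

section
/- Let n = ∑_{j=1}^{ℓ} 2^{m_j} with m_1 > m_2 > ⋯ > m_ℓ ≥ 0 be the binary expansion of n ≥ 1. Define c : ℕ → ℕ by c(1) = 0, c(2n) = 2·c(n), c(2n+1) = c(n+1) + c(n) + 1. Then c(n) = ∑_{j=2}^{ℓ} 2^{m_j} · (m_1 − m_j − 2(j−2)). -/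
namespace MinCollessAux

def kk (n : ℕ) : ℕ :=
  if h : n = 0 then 0 else kk (n / 2) + n % 2
decreasing_by exact Nat.div_lt_self (Nat.pos_of_ne_zero h) one_lt_two

def AA (n : ℕ) : ℕ :=
  if h : n = 0 then 0 else 2 * AA (n / 2) + 2 * (n / 2)
decreasing_by exact Nat.div_lt_self (Nat.pos_of_ne_zero h) one_lt_two

def BB (n : ℕ) : ℕ :=
  if h : n = 0 then 0 else 2 * BB (n / 2) + (n % 2) * kk (n / 2)
decreasing_by exact Nat.div_lt_self (Nat.pos_of_ne_zero h) one_lt_two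

lemma kk_zero : kk 0 = 0 := by rw [kk]; simp
lemma kk_one : kk 1 = 1 := by rw [kk]; norm_num [kk_zero]

lemma kk_even (p : ℕ) (hp : 1 ≤ p) : kk (2 * p) = kk p := by
  rw [kk, dif_neg (by omega : ¬ 2 * p = 0),
    (by omega : 2 * p / 2 = p), (by omega : 2 * p % 2 = 0)]
  omega

lemma kk_odd (p : ℕ) : kk (2 * p + 1) = kk p + 1 := by
  rw [kk, dif_neg (by omega : ¬ 2 * p + 1 = 0),
    (by omega : (2 * p + 1) / 2 = p), (by omega : (2 * p + 1) % 2 = 1)]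

lemma AA_zero : AA 0 = 0 := by rw [AA]; simp
lemma AA_one : AA 1 = 0 := by rw [AA]; norm_num [AA_zero]

lemma AA_even (p : ℕ) (hp : 1 ≤ p) : AA (2 * p) = 2 * AA p + 2 * p := by
  rw [AA, dif_neg (by omega : ¬ 2 * p = 0), (by omega : 2 * p / 2 = p)]

lemma AA_odd (p : ℕ) : AA (2 * p + 1) = 2 * AA p + 2 * p := by
  rw [AA, dif_neg (by omega : ¬ 2 * p + 1 = 0), (by omega : (2 * p + 1) / 2 = p)]

lemma BB_zero : BB 0 = 0 := by rw [BB]; simp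
lemma BB_one : BB 1 = 0 := by rw [BB]; norm_num [BB_zero, kk_zero]

lemma BB_even (p : ℕ) (hp : 1 ≤ p) : BB (2 * p) = 2 * BB p := by
  rw [BB, dif_neg (by omega : ¬ 2 * p = 0),
    (by omega : 2 * p / 2 = p), (by omega : 2 * p % 2 = 0)]
  omega

lemma BB_odd (p : ℕ) : BB (2 * p + 1) = 2 * BB p + kk p := by
  rw [BB, dif_neg (by omega : ¬ 2 * p + 1 = 0),
    (by omega : (2 * p + 1) / 2 = p), (by omega : (2 * p + 1) % 2 = 1)]
  ring

lemma log_even (p : ℕ) (hp : 1 ≤ p) : Nat.log 2 (2 * p) = Nat.log 2 p + 1 := by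
  rw [mul_comm]; exact Nat.log_mul_base one_lt_two (by omega)

lemma log_odd (p : ℕ) (hp : 1 ≤ p) : Nat.log 2 (2 * p + 1) = Nat.log 2 p + 1 := by
  have h1 : 2 ^ Nat.log 2 p ≤ p := Nat.pow_log_le_self 2 (by omega)
  have h2 : p < 2 ^ (Nat.log 2 p + 1) := Nat.lt_pow_succ_log_self one_lt_two p
  apply Nat.log_eq_of_pow_le_of_lt_pow
  · have : 2 ^ (Nat.log 2 p + 1) = 2 * 2 ^ Nat.log 2 p := by ring
    omega
  · have : 2 ^ (Nat.log 2 p + 1 + 1) = 2 * 2 ^ (Nat.log 2 p + 1) := by ring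
    omega

def Phi (n : ℕ) : ℤ :=
  ((Nat.log 2 n : ℤ) + 2) * n - 2 ^ (Nat.log 2 n + 1) - AA n - 2 * BB n

lemma Phi_one : Phi 1 = 0 := by
  unfold Phi
  rw [Nat.log_one_right, AA_one, BB_one]
  norm_num

lemma Phi_even (p : ℕ) (hp : 1 ≤ p) : Phi (2 * p) = 2 * Phi p := by
  unfold Phi
  rw [log_even p hp, AA_even p hp, BB_even p hp]
  push_cast
  ring

lemma Phi_odd (p : ℕ) (hp : 1 ≤ p) :
    Phi (2 * p + 1) = 2 * Phi p + (Nat.log 2 p : ℤ) + 3 - 2 * (kk p : ℤ) := by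
  unfold Phi
  rw [log_odd p hp, AA_odd p, BB_odd p]
  push_cast
  ring

lemma Phi_succ : ∀ p : ℕ, 1 ≤ p →
    Phi (p + 1) + 2 * (kk p : ℤ) = Phi p + (Nat.log 2 p : ℤ) + 2 := by
  intro p
  induction p using Nat.strong_induction_on with
  | _ p ih =>
    intro hp
    rcases (by omega : p = 1 ∨ 2 ≤ p) with h1 | h2
    · subst h1
      have e : (1 : ℕ) + 1 = 2 * 1 := by norm_num
      rw [kk_one, Nat.log_one_right, Phi_one, e, Phi_even 1 le_rfl, Phi_one]
      norm_num
    · have hq : 1 ≤ p / 2 := by omega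
      rcases (by omega : p = 2 * (p / 2) ∨ p = 2 * (p / 2) + 1) with he | ho
      · set q := p / 2 with hqdef
        rw [he, Phi_odd q hq, kk_even q hq, Phi_even q hq, log_even q hq]
        push_cast
        ring
      · set q := p / 2 with hqdef
        have hlt : q < p := by omega
        have ihq := ih q hlt hq
        rw [ho, (by ring : 2 * q + 1 + 1 = 2 * (q + 1))]
        rw [Phi_even (q + 1) (by omega), kk_odd q, Phi_odd q hq, log_odd q hq]
        push_cast
        push_cast at ihq
        linarith

lemma Phi_odd_split (q : ℕ) (hq : 1 ≤ q) :
    Phi (2 * q + 1) = Phi (q + 1) + Phi q + 1 := by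
  have h1 := Phi_succ q hq
  have h2 := Phi_odd q hq
  linarith

lemma c_eq_Phi (c : ℕ → ℕ) (h1 : c 1 = 0)
    (heven : ∀ n : ℕ, 1 ≤ n → c (2 * n) = 2 * c n)
    (hodd : ∀ n : ℕ, 1 ≤ n → c (2 * n + 1) = c (n + 1) + c n + 1) :
    ∀ n : ℕ, 1 ≤ n → (c n : ℤ) = Phi n := by
  intro n
  induction n using Nat.strong_induction_on with
  | _ n ih =>
    intro hn
    rcases (by omega : n = 1 ∨ 2 ≤ n) with hb | h2
    · subst hb; rw [h1, Phi_one]; norm_num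
    · have hq : 1 ≤ n / 2 := by omega
      set q := n / 2 with hqdef
      rcases (by omega : n = 2 * q ∨ n = 2 * q + 1) with he | ho
      · rw [he, heven q hq, Phi_even q hq]
        push_cast
        rw [ih q (by omega) hq]
      · rw [ho, hodd q hq, Phi_odd_split q hq]
        push_cast
        rw [ih q (by omega) hq, ih (q + 1) (by omega) (by omega)]

lemma term_AA (t : ℕ) (ht : 1 ≤ t) :
    2 * ((t - 1) * 2 ^ (t - 1)) + 2 * 2 ^ (t - 1) = t * 2 ^ t := by
  obtain ⟨s, rfl⟩ : ∃ s, t = s + 1 := ⟨t - 1, by omega⟩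
  simp only [Nat.add_sub_cancel]
  ring

lemma term_BB (j t : ℕ) (ht : 1 ≤ t) : 2 * (j * 2 ^ (t - 1)) = j * 2 ^ t := by
  obtain ⟨s, rfl⟩ : ∃ s, t = s + 1 := ⟨t - 1, by omega⟩
  simp only [Nat.add_sub_cancel]
  ring

lemma term_pow (t : ℕ) (ht : 1 ≤ t) : 2 * 2 ^ (t - 1) = 2 ^ t := by
  obtain ⟨s, rfl⟩ : ∃ s, t = s + 1 := ⟨t - 1, by omega⟩
  simp only [Nat.add_sub_cancel]
  ring

lemma repr_facts : ∀ n : ℕ, ∀ ℓ : ℕ, 1 ≤ ℓ → ∀ m : ℕ → ℕ,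
    (∀ i j : ℕ, i < j → j < ℓ → m j < m i) →
    n = ∑ j ∈ Finset.range ℓ, 2 ^ m j →
    kk n = ℓ ∧ AA n = ∑ j ∈ Finset.range ℓ, m j * 2 ^ m j ∧
      BB n = ∑ j ∈ Finset.range ℓ, j * 2 ^ m j ∧ n < 2 ^ (m 0 + 1) := by
  intro n
  induction n using Nat.strong_induction_on with
  | _ n ih =>
    intro ℓ hℓ m hmono hbin
    by_cases hlast : m (ℓ - 1) = 0
    · rcases (by omega : ℓ = 1 ∨ 2 ≤ ℓ) with hl1 | hl2
      · subst hl1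
        simp only [Finset.sum_range_one] at hbin
        simp only [Nat.sub_self] at hlast
        rw [hlast] at hbin
        norm_num at hbin
        subst hbin
        rw [Finset.sum_range_one, Finset.sum_range_one, hlast, kk_one, AA_one, BB_one]
        norm_num
      · -- odd case: last exponent is 0
        obtain ⟨L, rfl⟩ : ∃ L, ℓ = L + 1 := ⟨ℓ - 1, by omega⟩
        have hL1 : 1 ≤ L := by omega
        have hlast' : m L = 0 := by simpa using hlast
        have hge : ∀ j, j < L → 1 ≤ m j := by
          intro j hj
          have := hmono j L hj (by omega)
          omega
        set n' := ∑ j ∈ Finset.range L, 2 ^ (m j - 1) with hn'def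
        have hsum2 : ∑ j ∈ Finset.range L, 2 ^ m j = 2 * n' := by
          rw [hn'def, Finset.mul_sum]
          refine Finset.sum_congr rfl fun j hj => ?_
          rw [Finset.mem_range] at hj
          exact (term_pow (m j) (hge j hj)).symm
        have hbin' : n = 2 * n' + 1 := by
          rw [hbin, Finset.sum_range_succ, hlast', pow_zero, hsum2]
        have hn'pos : 1 ≤ n' := by
          have h0 : (0 : ℕ) ∈ Finset.range L := by rw [Finset.mem_range]; omega
          have hle : 2 ^ (m 0 - 1) ≤ n' := by
            rw [hn'def]
            exact Finset.single_le_sum (f := fun j => 2 ^ (m j - 1)) (fun i _ => Nat.zero_le _) h0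
          have hp : 1 ≤ 2 ^ (m 0 - 1) := Nat.one_le_two_pow
          omega
        have hlt : n' < n := by omega
        obtain ⟨hk', hA', hB', hub'⟩ := ih n' hlt L hL1 (fun j => m j - 1)
          (by
            intro i j hij hj
            have ha := hmono i j hij (by omega)
            have hb := hge j hj
            show m j - 1 < m i - 1
            omega)
          rfl
        have hub'' : n' < 2 ^ (m 0 - 1 + 1) := hub'
        refine ⟨?_, ?_, ?_, ?_⟩
        · rw [hbin', kk_odd, hk']
        · rw [hbin', AA_odd, hA', hn'def, Finset.mul_sum, Finset.mul_sum,
            ← Finset.sum_add_distrib, Finset.sum_range_succ, hlast']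
          simp only [pow_zero, zero_mul, mul_one, add_zero]
          refine Finset.sum_congr rfl fun j hj => ?_
          rw [Finset.mem_range] at hj
          exact term_AA (m j) (hge j hj)
        · rw [hbin', BB_odd, hB', hk', Finset.mul_sum, Finset.sum_range_succ,
            hlast', pow_zero, mul_one]
          congr 1
          refine Finset.sum_congr rfl fun j hj => ?_
          rw [Finset.mem_range] at hj
          exact term_BB j (m j) (hge j hj)
        · have hm0 : 1 ≤ m 0 := hge 0 (by omega)
          have h1 : 2 ^ (m 0 - 1 + 1) = 2 ^ m 0 := by congr 1; omega
          rw [h1] at hub''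
          have h2 : 2 ^ (m 0 + 1) = 2 * 2 ^ m 0 := by ring
          omega
    · -- even case: all exponents ≥ 1
      have hge : ∀ j, j < ℓ → 1 ≤ m j := by
        intro j hj
        rcases (by omega : j = ℓ - 1 ∨ j < ℓ - 1) with h | h
        · subst h; omega
        · have := hmono j (ℓ - 1) h (by omega); omega
      set n' := ∑ j ∈ Finset.range ℓ, 2 ^ (m j - 1) with hn'def
      have hbin' : n = 2 * n' := by
        rw [hbin, hn'def, Finset.mul_sum]
        refine Finset.sum_congr rfl fun j hj => ?_
        rw [Finset.mem_range] at hj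
        exact (term_pow (m j) (hge j hj)).symm
      have hn'pos : 1 ≤ n' := by
        have h0 : (0 : ℕ) ∈ Finset.range ℓ := by rw [Finset.mem_range]; omega
        have hle : 2 ^ (m 0 - 1) ≤ n' := by
          rw [hn'def]
          exact Finset.single_le_sum (f := fun j => 2 ^ (m j - 1)) (fun i _ => Nat.zero_le _) h0
        have hp : 1 ≤ 2 ^ (m 0 - 1) := Nat.one_le_two_pow
        omega
      have hlt : n' < n := by omega
      obtain ⟨hk', hA', hB', hub'⟩ := ih n' hlt ℓ hℓ (fun j => m j - 1)
        (by
          intro i j hij hj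
          have ha := hmono i j hij hj
          have hb := hge j hj
          show m j - 1 < m i - 1
          omega)
        rfl
      have hub'' : n' < 2 ^ (m 0 - 1 + 1) := hub'
      refine ⟨?_, ?_, ?_, ?_⟩
      · rw [hbin', kk_even n' hn'pos, hk']
      · rw [hbin', AA_even n' hn'pos, hA', hn'def, Finset.mul_sum, Finset.mul_sum,
          ← Finset.sum_add_distrib]
        refine Finset.sum_congr rfl fun j hj => ?_
        rw [Finset.mem_range] at hj
        exact term_AA (m j) (hge j hj)
      · rw [hbin', BB_even n' hn'pos, hB', Finset.mul_sum]
        refine Finset.sum_congr rfl fun j hj => ?_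
        rw [Finset.mem_range] at hj
        exact term_BB j (m j) (hge j hj)
      · have hm0 : 1 ≤ m 0 := hge 0 (by omega)
        have h1 : 2 ^ (m 0 - 1 + 1) = 2 ^ m 0 := by congr 1; omega
        rw [h1] at hub''
        have h2 : 2 ^ (m 0 + 1) = 2 * 2 ^ m 0 := by ring
        omega

end MinCollessAux

open MinCollessAux in
theorem minColless_binary_expansion (c : ℕ → ℕ) (h1 : c 1 = 0)
    (heven : ∀ n : ℕ, 1 ≤ n → c (2 * n) = 2 * c n)
    (hodd : ∀ n : ℕ, 1 ≤ n → c (2 * n + 1) = c (n + 1) + c n + 1)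
    (n ℓ : ℕ) (hℓ : 1 ≤ ℓ) (m : ℕ → ℕ)
    (hmono : ∀ i j : ℕ, i < j → j < ℓ → m j < m i)
    (hbin : n = ∑ j ∈ Finset.range ℓ, 2 ^ m j) :
    (c n : ℤ) =
      ∑ j ∈ Finset.Ico 1 ℓ, (2 : ℤ) ^ m j * ((m 0 : ℤ) - (m j : ℤ) - 2 * ((j : ℤ) - 1)) := by
  have h0mem : (0 : ℕ) ∈ Finset.range ℓ := by rw [Finset.mem_range]; omega
  have hlow : 2 ^ m 0 ≤ n := by
    rw [hbin]
    exact Finset.single_le_sum (f := fun j => 2 ^ m j) (fun i _ => Nat.zero_le _) h0mem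
  have hn1 : 1 ≤ n := le_trans Nat.one_le_two_pow hlow
  obtain ⟨hk, hA, hB, hub⟩ := repr_facts n ℓ hℓ m hmono hbin
  have hlog : Nat.log 2 n = m 0 := Nat.log_eq_of_pow_le_of_lt_pow hlow hub
  rw [c_eq_Phi c h1 heven hodd n hn1]
  unfold Phi
  rw [hlog, hA, hB]
  have hsplit : ∑ j ∈ Finset.range ℓ,
        (2 : ℤ) ^ m j * ((m 0 : ℤ) - (m j : ℤ) - 2 * ((j : ℤ) - 1))
      = 2 * (2 : ℤ) ^ m 0
        + ∑ j ∈ Finset.Ico 1 ℓ,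
            (2 : ℤ) ^ m j * ((m 0 : ℤ) - (m j : ℤ) - 2 * ((j : ℤ) - 1)) := by
    rw [Finset.range_eq_Ico,
      Finset.sum_eq_sum_Ico_succ_bot (by omega : 0 < ℓ)
        (fun j => (2 : ℤ) ^ m j * ((m 0 : ℤ) - (m j : ℤ) - 2 * ((j : ℤ) - 1)))]
    push_cast
    ring
  have hexpand : ∑ j ∈ Finset.range ℓ,
        (2 : ℤ) ^ m j * ((m 0 : ℤ) - (m j : ℤ) - 2 * ((j : ℤ) - 1))
      = ((m 0 : ℤ) + 2) * (∑ j ∈ Finset.range ℓ, (2 : ℤ) ^ m j)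
        - (∑ j ∈ Finset.range ℓ, (m j : ℤ) * 2 ^ m j)
        - 2 * (∑ j ∈ Finset.range ℓ, (j : ℤ) * 2 ^ m j) := by
    rw [Finset.mul_sum, Finset.mul_sum, ← Finset.sum_sub_distrib, ← Finset.sum_sub_distrib]
    exact Finset.sum_congr rfl fun j _ => by ring
  have hbz : (n : ℤ) = ∑ j ∈ Finset.range ℓ, (2 : ℤ) ^ m j := by
    rw [hbin]; push_cast; ring
  have hpow : (2 : ℤ) ^ (m 0 + 1) = 2 * 2 ^ m 0 := by ring
  push_cast
  rw [hbz, hpow]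
  linarith [hsplit, hexpand]
end

section
/- Let s(x) = min over integers z of |x − z| denote the distance from a real x to the nearest integer. Define c : ℕ → ℕ by c(1) = 0, c(2n) = 2·c(n), c(2n+1) = c(n+1) + c(n) + 1, and let k_n = ⌈log₂ n⌉. Then for every n ≥ 1, c(n) = ∑_{j=1}^{k_n − 1} 2^j · s(n / 2^j). -/
/-- The distance from a real number to the nearest integer. -/
noncomputable def nearestIntDist (x : ℝ) : ℝ := ⨅ z : ℤ, |x - (z : ℝ)|

lemma nid_bdd (x : ℝ) : BddBelow (Set.range fun z : ℤ => |x - (z : ℝ)|) :=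
  ⟨0, by rintro y ⟨z, rfl⟩; positivity⟩

lemma nid_formula (a b : ℕ) (hb : 0 < b) :
    nearestIntDist ((a : ℝ) / b) = ((min (a % b) (b - a % b) : ℕ) : ℝ) / b := by
  set r := a % b with hrdef
  set q := a / b with hqdef
  have hrb : r < b := Nat.mod_lt _ hb
  have hq : b * q + r = a := Nat.div_add_mod a b
  have hbR : (0 : ℝ) < b := by exact_mod_cast hb
  have haR : (a : ℝ) = b * q + r := by exact_mod_cast hq.symm
  have hx1 : (a : ℝ) / b - (q : ℤ) = r / b := by
    push_cast; rw [haR]; field_simp; ring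
  have hx2 : ((q : ℤ) : ℝ) + 1 - (a : ℝ) / b = (b - r) / b := by
    push_cast; rw [haR]; field_simp; ring
  have hminle1 : ((min r (b - r) : ℕ) : ℝ) ≤ r := by
    exact_mod_cast Nat.min_le_left _ _
  have hminle2 : ((min r (b - r) : ℕ) : ℝ) ≤ ((b : ℝ) - r) := by
    have : ((min r (b - r) : ℕ) : ℝ) ≤ ((b - r : ℕ) : ℝ) := by
      exact_mod_cast Nat.min_le_right _ _
    rwa [Nat.cast_sub hrb.le] at this
  apply le_antisymm
  · rcases le_total r (b - r) with h | h
    · have := ciInf_le (nid_bdd ((a : ℝ) / b)) (q : ℤ)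
      calc nearestIntDist ((a : ℝ) / b) ≤ |(a : ℝ) / b - ((q : ℤ) : ℝ)| := this
        _ = r / b := by rw [hx1, abs_of_nonneg (by positivity)]
        _ = ((min r (b - r) : ℕ) : ℝ) / b := by rw [min_eq_left h]
    · have := ciInf_le (nid_bdd ((a : ℝ) / b)) ((q : ℤ) + 1)
      calc nearestIntDist ((a : ℝ) / b) ≤ |(a : ℝ) / b - (((q : ℤ) + 1 : ℤ) : ℝ)| := this
        _ = (b - r) / b := by
            rw [abs_sub_comm]
            push_cast
            rw [show ((q:ℝ) + 1 - a / b) = ((q:ℤ):ℝ) + 1 - (a:ℝ)/b by push_cast; ring, hx2,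
              abs_of_nonneg (div_nonneg (sub_nonneg.mpr (by exact_mod_cast hrb.le)) hbR.le)]
        _ = ((min r (b - r) : ℕ) : ℝ) / b := by
            rw [min_eq_right h, Nat.cast_sub hrb.le]
  · apply le_ciInf
    intro z
    rcases le_or_gt z q with h | h
    · have hz : ((z : ℝ)) ≤ (q : ℝ) := by exact_mod_cast h
      have : (r : ℝ) / b ≤ (a : ℝ) / b - z := by
        have := hx1
        push_cast at this ⊢
        linarith
      calc ((min r (b - r) : ℕ) : ℝ) / b ≤ (r : ℝ) / b := by gcongr
        _ ≤ (a : ℝ) / b - z := this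
        _ ≤ |(a : ℝ) / b - z| := le_abs_self _
    · have hz : (q : ℝ) + 1 ≤ (z : ℝ) := by exact_mod_cast h
      have : ((b : ℝ) - r) / b ≤ (z : ℝ) - (a : ℝ) / b := by
        have := hx2
        push_cast at this ⊢
        linarith
      calc ((min r (b - r) : ℕ) : ℝ) / b ≤ ((b : ℝ) - r) / b := by gcongr
        _ ≤ (z : ℝ) - (a : ℝ) / b := this
        _ ≤ |(a : ℝ) / b - z| := by rw [abs_sub_comm]; exact le_abs_self _

lemma nid_nat (n : ℕ) : nearestIntDist (n : ℝ) = 0 := by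
  have h := nid_formula n 1 one_pos
  rw [Nat.mod_one] at h
  norm_num at h
  exact h

lemma nid_half (n : ℕ) : nearestIntDist ((2 * (n : ℝ) + 1) / 2) = 1 / 2 := by
  have h := nid_formula (2 * n + 1) 2 (by norm_num)
  have hm : (2 * n + 1) % 2 = 1 := by omega
  have e : ((2 * n + 1 : ℕ) : ℝ) / ((2 : ℕ) : ℝ) = (2 * (n : ℝ) + 1) / 2 := by
    push_cast; ring
  rw [hm, e] at h
  norm_num at h
  exact h

lemma nid_mid (n m : ℕ) (hm : 0 < m) :
    2 * nearestIntDist ((2 * (n : ℝ) + 1) / (2 * (2 * m))) =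
      nearestIntDist ((n : ℝ) / (2 * m)) + nearestIntDist (((n : ℝ) + 1) / (2 * m)) := by
  set M := 2 * m with hM
  set r := n % M with hr
  have hrM : r < M := Nat.mod_lt _ (by omega)
  set q := n / M with hqd
  have hq : M * q + r = n := Nat.div_add_mod n M
  have h1 : (2 * n + 1) % (2 * M) = 2 * r + 1 := by
    have e : 2 * n + 1 = (2 * M) * q + (2 * r + 1) := by rw [← hq]; ring
    rw [e, Nat.mul_add_mod, Nat.mod_eq_of_lt (by omega)]
  have h2 : (n + 1) % M = (r + 1) % M := by
    have e : n + 1 = M * q + (r + 1) := by omega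
    rw [e, Nat.mul_add_mod]
  have f1 := nid_formula (2 * n + 1) (2 * M) (by omega)
  have f2 := nid_formula n M (by omega)
  have f3 := nid_formula (n + 1) M (by omega)
  rw [h1] at f1
  rw [h2] at f3
  rw [← hr] at f2
  have key : min (2 * r + 1) (2 * M - (2 * r + 1)) =
      min r (M - r) + min ((r + 1) % M) (M - (r + 1) % M) := by
    rcases Nat.lt_or_ge (r + 1) M with h | h
    · rw [Nat.mod_eq_of_lt h]; omega
    · have hrm : r + 1 = M := by omega
      rw [hrm, Nat.mod_self]; omega
  have keyR : ((min (2 * r + 1) (2 * M - (2 * r + 1)) : ℕ) : ℝ) =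
      ((min r (M - r) : ℕ) : ℝ) + ((min ((r + 1) % M) (M - (r + 1) % M) : ℕ) : ℝ) := by
    exact_mod_cast congrArg (Nat.cast : ℕ → ℝ) key
  have a1 : (2 * (n : ℝ) + 1) / (2 * (2 * (m : ℝ))) = ((2 * n + 1 : ℕ) : ℝ) / ((2 * M : ℕ) : ℝ) := by
    rw [hM]; push_cast; ring
  have a2 : (n : ℝ) / (2 * (m : ℝ)) = ((n : ℕ) : ℝ) / ((M : ℕ) : ℝ) := by
    rw [hM]; push_cast; ring
  have a3 : ((n : ℝ) + 1) / (2 * (m : ℝ)) = ((n + 1 : ℕ) : ℝ) / ((M : ℕ) : ℝ) := by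
    rw [hM]; push_cast; ring
  rw [a1, a2, a3, f1, f2, f3, keyR]
  have hM0 : ((M : ℕ) : ℝ) ≠ 0 := by
    have : (0:ℝ) < (M : ℝ) := by exact_mod_cast (by omega : 0 < M)
    linarith
  push_cast
  field_simp

noncomputable def S (n K : ℕ) : ℝ :=
  ∑ i ∈ Finset.range K, (2 : ℝ) ^ (i + 1) * nearestIntDist ((n : ℝ) / 2 ^ (i + 1))

lemma S_even (m K : ℕ) : S (2 * m) (K + 1) = 2 * S m K := by
  unfold S
  have h : ∀ i : ℕ, ((2 * m : ℕ) : ℝ) / 2 ^ (i + 1) = (m : ℝ) / 2 ^ i := by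
    intro i; push_cast; rw [pow_succ]; field_simp
  simp only [h]
  rw [Finset.sum_range_succ']
  have h0 : (2 : ℝ) ^ (0 + 1) * nearestIntDist ((m : ℝ) / 2 ^ 0) = 0 := by
    simp [nid_nat m]
  rw [h0, add_zero, Finset.mul_sum]
  apply Finset.sum_congr rfl
  intro i _
  ring

lemma S_odd (m K : ℕ) : S (2 * m + 1) (K + 1) = 1 + S m K + S (m + 1) K := by
  unfold S
  rw [Finset.sum_range_succ']
  have h0 : (2 : ℝ) ^ (0 + 1) * nearestIntDist (((2 * m + 1 : ℕ) : ℝ) / 2 ^ (0 + 1)) = 1 := by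
    have e : ((2 * m + 1 : ℕ) : ℝ) / 2 ^ (0 + 1) = (2 * (m : ℝ) + 1) / 2 := by
      push_cast; ring
    rw [e, nid_half m]
    norm_num
  rw [h0]
  have hterm : ∀ i : ℕ, (2 : ℝ) ^ (i + 1 + 1) * nearestIntDist (((2 * m + 1 : ℕ) : ℝ) / 2 ^ (i + 1 + 1)) =
      (2 : ℝ) ^ (i + 1) * nearestIntDist ((m : ℝ) / 2 ^ (i + 1)) +
        (2 : ℝ) ^ (i + 1) * nearestIntDist (((m + 1 : ℕ) : ℝ) / 2 ^ (i + 1)) := by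
    intro i
    have hmid := nid_mid m (2 ^ i) (by positivity)
    have e1 : ((2 * m + 1 : ℕ) : ℝ) / 2 ^ (i + 1 + 1) = (2 * (m : ℝ) + 1) / (2 * (2 * ((2 ^ i : ℕ) : ℝ))) := by
      push_cast; ring
    have e2 : ((m : ℕ) : ℝ) / 2 ^ (i + 1) = (m : ℝ) / (2 * ((2 ^ i : ℕ) : ℝ)) := by
      push_cast; ring
    have e3 : ((m + 1 : ℕ) : ℝ) / 2 ^ (i + 1) = ((m : ℝ) + 1) / (2 * ((2 ^ i : ℕ) : ℝ)) := by
      push_cast; ring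
    rw [e1, e2, e3]
    have : (2 : ℝ) ^ (i + 1 + 1) * nearestIntDist ((2 * (m : ℝ) + 1) / (2 * (2 * ((2 ^ i : ℕ) : ℝ)))) =
        (2 : ℝ) ^ (i + 1) * (2 * nearestIntDist ((2 * (m : ℝ) + 1) / (2 * (2 * ((2 ^ i : ℕ) : ℝ))))) := by
      ring
    rw [this, hmid]
    ring
  simp only [hterm]
  rw [Finset.sum_add_distrib]
  ring

lemma S_succ (n K : ℕ) (h : (2 : ℕ) ^ (K + 1) ∣ n) : S n (K + 1) = S n K := by
  unfold S
  rw [Finset.sum_range_succ]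
  have h0 : nearestIntDist ((n : ℝ) / 2 ^ (K + 1)) = 0 := by
    have hf := nid_formula n (2 ^ (K + 1)) (by positivity)
    have hmod : n % 2 ^ (K + 1) = 0 := Nat.mod_eq_zero_of_dvd h
    rw [hmod] at hf
    have e : ((n : ℕ) : ℝ) / ((2 ^ (K + 1) : ℕ) : ℝ) = (n : ℝ) / 2 ^ (K + 1) := by
      push_cast; ring
    rw [e] at hf
    simpa using hf
  rw [h0, mul_zero, add_zero]

lemma clog2_double (m : ℕ) (hm : 1 ≤ m) : Nat.clog 2 (2 * m) = Nat.clog 2 m + 1 := by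
  rw [Nat.clog_of_two_le (by norm_num) (by omega)]
  have e : (2 * m + 2 - 1) / 2 = m := by omega
  rw [e]

lemma clog2_odd (m : ℕ) (hm : 1 ≤ m) : Nat.clog 2 (2 * m + 1) = Nat.clog 2 (m + 1) + 1 := by
  rw [Nat.clog_of_two_le (by norm_num) (by omega)]
  have e : (2 * m + 1 + 2 - 1) / 2 = m + 1 := by omega
  rw [e]

lemma clog2_succ_cases (m : ℕ) (hm : 1 ≤ m) :
    Nat.clog 2 (m + 1) = Nat.clog 2 m ∨
      (m = 2 ^ Nat.clog 2 m ∧ Nat.clog 2 (m + 1) = Nat.clog 2 m + 1) := by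
  set k := Nat.clog 2 m with hk
  rcases le_or_gt (m + 1) (2 ^ k) with h | h
  · left
    exact le_antisymm ((Nat.clog_le_iff_le_pow (by norm_num)).mpr h)
      (Nat.clog_mono_right _ (by omega))
  · right
    have hm2 : m ≤ 2 ^ k := Nat.le_pow_clog (by norm_num) m
    have hmeq : m = 2 ^ k := by omega
    refine ⟨hmeq, le_antisymm ?_ ?_⟩
    · apply (Nat.clog_le_iff_le_pow (by norm_num)).mpr
      have h1 : (1 : ℕ) ≤ 2 ^ k := Nat.one_le_two_pow
      have h2 : (2 : ℕ) ^ (k + 1) = 2 ^ k + 2 ^ k := by ring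
      omega
    · have hnot : ¬ Nat.clog 2 (m + 1) ≤ k := by
        intro hc
        have := (Nat.clog_le_iff_le_pow (by norm_num : (1:ℕ) < 2)).mp hc
        omega
      omega

lemma sum_Icc_S (n K : ℕ) :
    ∑ j ∈ Finset.Icc 1 K, (2 : ℝ) ^ j * nearestIntDist ((n : ℝ) / 2 ^ j) = S n K := by
  rw [← Finset.Ico_add_one_right_eq_Icc, Finset.sum_Ico_eq_sum_range]
  have e : K + 1 - 1 = K := by omega
  rw [e]
  unfold S
  apply Finset.sum_congr rfl
  intro i _
  rw [Nat.add_comm 1 i]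

theorem minColless_nearestIntDist (c : ℕ → ℕ) (h1 : c 1 = 0)
    (heven : ∀ n : ℕ, 1 ≤ n → c (2 * n) = 2 * c n)
    (hodd : ∀ n : ℕ, 1 ≤ n → c (2 * n + 1) = c (n + 1) + c n + 1) :
    ∀ n : ℕ, 1 ≤ n →
      (c n : ℝ) =
        ∑ j ∈ Finset.Icc 1 (Nat.clog 2 n - 1),
          (2 : ℝ) ^ j * nearestIntDist ((n : ℝ) / 2 ^ j) := by
  have hS : ∀ n : ℕ, 1 ≤ n → (c n : ℝ) = S n (Nat.clog 2 n - 1) := by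
    intro n
    induction n using Nat.strong_induction_on with
    | _ n IH =>
      intro hn
      rcases Nat.lt_or_ge n 2 with h2 | h2
      · have : n = 1 := by omega
        subst this
        simp [S, h1, Nat.clog_one_right]
      · rcases Nat.even_or_odd n with ⟨m, hm⟩ | ⟨m, hm⟩
        · have hm1 : 1 ≤ m := by omega
          have hn2 : n = 2 * m := by omega
          subst hn2
          rw [heven m hm1, clog2_double m hm1]
          rcases Nat.lt_or_ge m 2 with hm2 | hm2
          · have : m = 1 := by omega
            subst this
            simp [S, h1, Nat.clog_one_right]
          · have hk : 1 ≤ Nat.clog 2 m := Nat.clog_pos (by norm_num) hm2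
            rw [show Nat.clog 2 m + 1 - 1 = (Nat.clog 2 m - 1) + 1 by omega, S_even]
            rw [← IH m (by omega) hm1]
            push_cast
            ring
        · have hm1 : 1 ≤ m := by omega
          have hn2 : n = 2 * m + 1 := hm
          subst hn2
          rw [hodd m hm1, clog2_odd m hm1]
          have hk' : 1 ≤ Nat.clog 2 (m + 1) := Nat.clog_pos (by norm_num) (by omega)
          rw [show Nat.clog 2 (m + 1) + 1 - 1 = (Nat.clog 2 (m + 1) - 1) + 1 by omega, S_odd]
          have hSm : S m (Nat.clog 2 (m + 1) - 1) = S m (Nat.clog 2 m - 1) := by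
            rcases clog2_succ_cases m hm1 with h | ⟨hpow, h⟩
            · rw [h]
            · rcases Nat.eq_zero_or_pos (Nat.clog 2 m) with h0 | h0
              · rw [h, h0]
              · rw [h, show Nat.clog 2 m + 1 - 1 = (Nat.clog 2 m - 1) + 1 by omega,
                  S_succ m (Nat.clog 2 m - 1)
                    (by rw [show Nat.clog 2 m - 1 + 1 = Nat.clog 2 m by omega]; exact hpow ▸ dvd_refl _)]
          rw [hSm, ← IH m (by omega) hm1, ← IH (m + 1) (by omega) (by omega)]
          push_cast
          ring
  intro n hn
  rw [hS n hn, sum_Icc_S]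
end

section
/- Define c : ℕ → ℕ by c(1) = 0, c(2n) = 2·c(n), c(2n+1) = c(n+1) + c(n) + 1. Then for every n ≥ 1, c(n) < n/2; equivalently, 2·c(n) < n. -/
theorem minColless_lt_half (c : ℕ → ℕ) (h1 : c 1 = 0)
    (heven : ∀ n : ℕ, 1 ≤ n → c (2 * n) = 2 * c n)
    (hodd : ∀ n : ℕ, 1 ≤ n → c (2 * n + 1) = c (n + 1) + c n + 1) :
    ∀ n : ℕ, 1 ≤ n → 2 * c n < n := by
  have key : ∀ n : ℕ, 1 ≤ n → 2 * c n + (2 - n % 2) ≤ n := by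
    intro n
    induction n using Nat.strong_induction_on with
    | _ n ih =>
      intro hn
      rcases Nat.even_or_odd n with ⟨m, hm⟩ | ⟨m, hm⟩
      · -- n = 2m
        have hm1 : 1 ≤ m := by omega
        have hrec : c (2 * m) = 2 * c m := heven m hm1
        have hA := ih m (by omega) hm1
        have hn2 : n = 2 * m := by omega
        rw [hn2, hrec]
        omega
      · -- n = 2m + 1
        rcases Nat.eq_zero_or_pos m with h0 | hm1
        · subst h0
          have : n = 1 := by omega
          rw [this, h1]
        · have hrec : c (2 * m + 1) = c (m + 1) + c m + 1 := hodd m hm1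
          have hA := ih m (by omega) hm1
          have hB := ih (m + 1) (by omega) (by omega)
          rw [hm, hrec]
          omega
  intro n hn
  have := key n hn
  omega
end

section
/- Define c : ℕ → ℕ by c(1) = 0, c(2n) = 2·c(n), c(2n+1) = c(n+1) + c(n) + 1. Then for every m ≥ 1 and every p with 1 ≤ p ≤ 2^m − 1, c(2^m + p) = c(2^{m+1} − p). -/
theorem minColless_symmetry (c : ℕ → ℕ) (h1 : c 1 = 0)
    (heven : ∀ n : ℕ, 1 ≤ n → c (2 * n) = 2 * c n)
    (hodd : ∀ n : ℕ, 1 ≤ n → c (2 * n + 1) = c (n + 1) + c n + 1) :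
    ∀ m : ℕ, 1 ≤ m → ∀ p : ℕ, 1 ≤ p → p ≤ 2 ^ m - 1 →
      c (2 ^ m + p) = c (2 ^ (m + 1) - p) := by
  have h2 : c 2 = 0 := by have := heven 1 le_rfl; simpa [h1] using this
  have h4 : c 4 = 0 := by have := heven 2 (by norm_num); simpa [h2] using this
  have key : ∀ m : ℕ, 1 ≤ m → ∀ p : ℕ, p ≤ 2 ^ m →
      c (2 ^ m + p) = c (2 ^ (m + 1) - p) := by
    intro m hm
    induction m, hm using Nat.le_induction with
    | base =>
      intro p hp
      norm_num at hp
      interval_cases p <;> simp [h2, h4]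
    | succ m hm IH =>
      intro p hp
      have hpow : (1:ℕ) ≤ 2 ^ m := Nat.one_le_two_pow
      have hpow1 : 2 ^ (m + 1) = 2 * 2 ^ m := by ring
      have hpow2 : 2 ^ (m + 2) = 2 * 2 ^ (m + 1) := by ring
      rcases Nat.even_or_odd p with ⟨q, rfl⟩ | ⟨q, rfl⟩
      · have hq : q ≤ 2 ^ m := by omega
        have e1 : 2 ^ (m + 1) + (q + q) = 2 * (2 ^ m + q) := by omega
        have e2 : 2 ^ (m + 1 + 1) - (q + q) = 2 * (2 ^ (m + 1) - q) := by omega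
        rw [e1, e2, heven _ (by omega), heven _ (by omega), IH q hq]
      · have hq : q + 1 ≤ 2 ^ m := by omega
        have e1 : 2 ^ (m + 1) + (2 * q + 1) = 2 * (2 ^ m + q) + 1 := by omega
        have e2 : 2 ^ (m + 1 + 1) - (2 * q + 1) = 2 * (2 ^ (m + 1) - (q + 1)) + 1 := by
          omega
        rw [e1, e2, hodd _ (by omega), hodd _ (by omega)]
        have e3 : 2 ^ (m + 1) - (q + 1) + 1 = 2 ^ (m + 1) - q := by omega
        have e4 : 2 ^ m + q + 1 = 2 ^ m + (q + 1) := by omega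
        rw [e3, e4, IH q (by omega), IH (q + 1) hq]; ring
  intro m hm p hp1 hp2
  have hpow : (1:ℕ) ≤ 2 ^ m := Nat.one_le_two_pow
  exact key m hm p (by omega)
end

section
/- Define c : ℕ → ℕ by c(1) = 0, c(2n) = 2·c(n), c(2n+1) = c(n+1) + c(n) + 1. Let s = 2^k·s₀ with k ≥ 1 and s₀ ≥ 1. Then for every m ≥ 1, the equality c(m+s) + c(m) + s = c(2m+s) holds if and only if m = 2^k·m₀ for some m₀ ≥ 1 with c(m₀+s₀) + c(m₀) + s₀ = c(2m₀+s₀). -/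
private def Fc (c : ℕ → ℕ) (m s : ℕ) : ℤ := (c m : ℤ) + c (m + s) + s - c (2 * m + s)

section ClAux

variable (c : ℕ → ℕ) (h1 : c 1 = 0)
  (heven : ∀ n : ℕ, 1 ≤ n → c (2 * n) = 2 * c n)
  (hodd : ∀ n : ℕ, 1 ≤ n → c (2 * n + 1) = c (n + 1) + c n + 1)

include h1 heven hodd in
private lemma clog_bound :
    ∀ n, 1 ≤ n → c (n + 1) ≤ c n + Nat.log 2 n ∧ c n ≤ c (n + 1) + Nat.log 2 n := by
  intro n
  induction n using Nat.strong_induction_on with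
  | _ n ih =>
    intro hn
    obtain ⟨t, ht | ht⟩ := Nat.even_or_odd' n
    · subst ht
      have ht1 : 1 ≤ t := by omega
      have hA := hodd t ht1
      have hB := heven t ht1
      have hlog : Nat.log 2 (2 * t) = Nat.log 2 t + 1 := by
        rw [mul_comm]; exact Nat.log_mul_base (by norm_num) (by omega)
      obtain ⟨u1, u2⟩ := ih t (by omega) ht1
      omega
    · subst ht
      rcases Nat.eq_zero_or_pos t with h0 | ht1
      · subst h0
        have h2 : c 2 = 0 := by have := heven 1 le_rfl; simp [h1] at this; simpa using this
        norm_num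
        omega
      · have hA := hodd t ht1
        have hC : c (2 * t + 1 + 1) = 2 * c (t + 1) := by
          have := heven (t + 1) (by omega)
          rw [show 2 * t + 1 + 1 = 2 * (t + 1) by ring]; exact this
        have hlog2 : Nat.log 2 t + 1 ≤ Nat.log 2 (2 * t + 1) := by
          have h1' : Nat.log 2 (2 * t) = Nat.log 2 t + 1 := by
            rw [mul_comm]; exact Nat.log_mul_base (by norm_num) (by omega)
          have := Nat.log_mono_right (b := 2) (show 2 * t ≤ 2 * t + 1 by omega)
          omega
        obtain ⟨u1, u2⟩ := ih t (by omega) ht1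
        omega

include heven in
private lemma FA (t σ : ℕ) (ht : 1 ≤ t) : Fc c (2 * t) (2 * σ) = 2 * Fc c t σ := by
  unfold Fc
  rw [show 2 * t + 2 * σ = 2 * (t + σ) by ring,
      show 2 * (2 * t) + 2 * σ = 2 * (2 * t + σ) by ring,
      heven t ht, heven (t + σ) (by omega), heven (2 * t + σ) (by omega)]
  push_cast; ring

include heven hodd in
private lemma FB (t σ : ℕ) (ht : 1 ≤ t) :
    Fc c (2 * t) (2 * σ + 1) = Fc c t σ + Fc c t (σ + 1) := by
  unfold Fc
  rw [show 2 * t + (2 * σ + 1) = 2 * (t + σ) + 1 by ring,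
      show 2 * (2 * t) + (2 * σ + 1) = 2 * (2 * t + σ) + 1 by ring,
      show t + (σ + 1) = t + σ + 1 by ring,
      show 2 * t + (σ + 1) = 2 * t + σ + 1 by ring,
      heven t ht, hodd (t + σ) (by omega), hodd (2 * t + σ) (by omega)]
  push_cast; ring

include heven hodd in
private lemma FCl (t σ : ℕ) (ht : 1 ≤ t) :
    Fc c (2 * t + 1) (2 * σ + 1) = Fc c t (σ + 1) + Fc c (t + 1) σ := by
  unfold Fc
  rw [show 2 * t + 1 + (2 * σ + 1) = 2 * (t + σ + 1) by ring,
      show 2 * (2 * t + 1) + (2 * σ + 1) = 2 * (2 * t + σ + 1) + 1 by ring,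
      show t + (σ + 1) = t + σ + 1 by ring,
      show 2 * t + (σ + 1) = 2 * t + σ + 1 by ring,
      show t + 1 + σ = t + σ + 1 by ring,
      show 2 * (t + 1) + σ = 2 * t + σ + 2 by ring,
      hodd t ht, heven (t + σ + 1) (by omega), hodd (2 * t + σ + 1) (by omega)]
  rw [show 2 * t + σ + 1 + 1 = 2 * t + σ + 2 by ring]
  push_cast; ring

include heven hodd in
private lemma FD (t u : ℕ) (ht : 1 ≤ t) :
    Fc c (2 * t + 1) (2 * (2 * u)) = Fc c t (2 * u) + Fc c (t + 1) (2 * u) := by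
  unfold Fc
  rw [show 2 * t + 1 + 2 * (2 * u) = 2 * (t + 2 * u) + 1 by ring,
      show 2 * (2 * t + 1) + 2 * (2 * u) = 2 * (2 * (t + u) + 1) by ring,
      show t + 1 + 2 * u = t + 2 * u + 1 by ring,
      show 2 * (t + 1) + 2 * u = 2 * (t + u + 1) by ring,
      show 2 * t + 2 * u = 2 * (t + u) by ring,
      hodd t ht, hodd (t + 2 * u) (by omega), heven (2 * (t + u) + 1)]
  · rw [hodd (t + u) (by omega), heven (t + u) (by omega), heven (t + u + 1) (by omega)]
    push_cast; ring
  · omega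

include heven hodd in
private lemma FE (t u : ℕ) (ht : 1 ≤ t) :
    Fc c (2 * t + 1) (2 * (2 * u + 1)) = Fc c t (2 * u + 2) + Fc c (t + 1) (2 * u) + 2 := by
  unfold Fc
  rw [show 2 * t + 1 + 2 * (2 * u + 1) = 2 * (t + 2 * u + 1) + 1 by ring,
      show 2 * (2 * t + 1) + 2 * (2 * u + 1) = 2 * (2 * (t + u + 1)) by ring,
      show t + (2 * u + 2) = t + 2 * u + 2 by ring,
      show 2 * t + (2 * u + 2) = 2 * (t + u + 1) by ring,
      show t + 1 + 2 * u = t + 2 * u + 1 by ring,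
      show 2 * (t + 1) + 2 * u = 2 * (t + u + 1) by ring,
      hodd t ht, hodd (t + 2 * u + 1) (by omega),
      heven (2 * (t + u + 1)) (by omega), heven (t + u + 1) (by omega)]
  rw [show t + 2 * u + 1 + 1 = t + 2 * u + 2 by ring]
  push_cast; ring

include h1 heven hodd in
private lemma F1_ge (s : ℕ) : (s : ℤ) - Nat.log 2 (s + 1) ≤ Fc c 1 s := by
  have hb := (clog_bound c h1 heven hodd (s + 1) (by omega)).1
  unfold Fc
  rw [h1, show 1 + s = s + 1 by ring, show 2 * 1 + s = s + 1 + 1 by ring]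
  push_cast
  omega

include h1 heven hodd in
private lemma Fnonneg : ∀ m, 1 ≤ m → ∀ s, 0 ≤ Fc c m s := by
  intro m
  induction m using Nat.strong_induction_on with
  | _ m ih =>
    intro hm s
    obtain ⟨t, ht | ht⟩ := Nat.even_or_odd' m
    · subst ht
      have ht1 : 1 ≤ t := by omega
      obtain ⟨σ, hσ | hσ⟩ := Nat.even_or_odd' s
      · subst hσ
        rw [FA c heven t σ ht1]
        have := ih t (by omega) ht1 σ
        omega
      · subst hσ
        rw [FB c heven hodd t σ ht1]
        have := ih t (by omega) ht1 σ
        have := ih t (by omega) ht1 (σ + 1)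
        omega
    · subst ht
      rcases Nat.eq_zero_or_pos t with h0 | ht1
      · subst h0
        have := F1_ge c h1 heven hodd s
        have hl : Nat.log 2 (s + 1) ≤ s := by
          have := Nat.log_lt_of_lt_pow (b := 2) (show s + 1 ≠ 0 by omega) (Nat.lt_two_pow_self (n := s + 1))
          omega
        norm_num at this ⊢
        omega
      · obtain ⟨σ, hσ | hσ⟩ := Nat.even_or_odd' s
        · subst hσ
          obtain ⟨u, hu | hu⟩ := Nat.even_or_odd' σ
          · subst hu
            rw [FD c heven hodd t u ht1]
            have := ih t (by omega) ht1 (2 * u)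
            have := ih (t + 1) (by omega) (by omega) (2 * u)
            omega
          · subst hu
            rw [FE c heven hodd t u ht1]
            have := ih t (by omega) ht1 (2 * u + 2)
            have := ih (t + 1) (by omega) (by omega) (2 * u)
            omega
        · subst hσ
          rw [FCl c heven hodd t σ ht1]
          have := ih t (by omega) ht1 (σ + 1)
          have := ih (t + 1) (by omega) (by omega) σ
          omega

include h1 heven hodd in
private lemma Podd : ∀ m, 1 ≤ m → Odd m → ∀ u, 1 ≤ u → Fc c m (2 * u) ≠ 0 := by
  intro m
  induction m using Nat.strong_induction_on with
  | _ m ih =>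
    intro hm hoddm u hu
    have hm1 := Nat.odd_iff.mp hoddm
    obtain ⟨t, rfl⟩ : ∃ t, m = 2 * t + 1 := ⟨m / 2, by omega⟩
    rcases Nat.eq_zero_or_pos t with h0 | ht1
    · subst h0
      have := F1_ge c h1 heven hodd (2 * u)
      have hl : Nat.log 2 (2 * u + 1) < 2 * u := by
        apply Nat.log_lt_of_lt_pow (by omega)
        have h2 : ∀ n, 2 ≤ n → n + 1 < 2 ^ n := by
          intro n hn
          induction n with
          | zero => omega
          | succ k ihk =>
            rcases Nat.lt_or_ge k 2 with h | h
            · interval_cases k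
              · omega
              · norm_num
            · have := ihk (by omega)
              have : 2 ^ (k + 1) = 2 * 2 ^ k := by ring
              omega
        exact h2 (2 * u) (by omega)
      norm_num at this ⊢
      omega
    · obtain ⟨v, hv | hv⟩ := Nat.even_or_odd' u
      · subst hv
        rw [FD c heven hodd t v ht1]
        have n1 := Fnonneg c h1 heven hodd t ht1 (2 * v)
        have n2 := Fnonneg c h1 heven hodd (t + 1) (by omega) (2 * v)
        have hv1 : 1 ≤ v := by omega
        obtain ⟨w, hw | hw⟩ := Nat.even_or_odd' t
        · have h3 := ih (t + 1) (by omega) (by omega) ⟨w, by omega⟩ v hv1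
          omega
        · have h3 := ih t (by omega) ht1 ⟨w, by omega⟩ v hv1
          omega
      · subst hv
        rw [FE c heven hodd t v ht1]
        have n1 := Fnonneg c h1 heven hodd t ht1 (2 * v + 2)
        have n2 := Fnonneg c h1 heven hodd (t + 1) (by omega) (2 * v)
        omega

include h1 heven hodd in
private lemma Kone (σ : ℕ) (hσ : 1 ≤ σ) (m : ℕ) (hm : 1 ≤ m) :
    Fc c m (2 * σ) = 0 ↔ ∃ m₀, 1 ≤ m₀ ∧ m = 2 * m₀ ∧ Fc c m₀ σ = 0 := by
  constructor
  · intro h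
    obtain ⟨t, ht | ht⟩ := Nat.even_or_odd' m
    · subst ht
      have ht1 : 1 ≤ t := by omega
      refine ⟨t, ht1, rfl, ?_⟩
      have h2 := FA c heven t σ ht1
      rw [h] at h2
      linarith
    · exfalso
      exact Podd c h1 heven hodd m hm ⟨t, by omega⟩ σ hσ h
  · rintro ⟨m₀, hm₀, rfl, h⟩
    rw [FA c heven m₀ σ hm₀, h]
    ring

private lemma Fzero_iff (m s : ℕ) :
    Fc c m s = 0 ↔ c (m + s) + c m + s = c (2 * m + s) := by
  unfold Fc
  omega

include h1 heven hodd in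
private lemma mainF : ∀ k, 1 ≤ k → ∀ s₀, 1 ≤ s₀ → ∀ m, 1 ≤ m →
    (Fc c m (2 ^ k * s₀) = 0 ↔ ∃ m₀, 1 ≤ m₀ ∧ m = 2 ^ k * m₀ ∧ Fc c m₀ s₀ = 0) := by
  intro k hk
  induction k, hk using Nat.le_induction with
  | base =>
    intro s₀ hs₀ m hm
    rw [show (2:ℕ) ^ 1 = 2 by norm_num]
    exact Kone c h1 heven hodd s₀ hs₀ m hm
  | succ k hk ihk =>
    intro s₀ hs₀ m hm
    have e : 2 ^ (k + 1) * s₀ = 2 ^ k * (2 * s₀) := by ring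
    rw [e, ihk (2 * s₀) (by omega) m hm]
    constructor
    · rintro ⟨m₁, hm₁, rfl, h⟩
      obtain ⟨m₀, hm₀, rfl, h₀⟩ := (Kone c h1 heven hodd s₀ hs₀ m₁ hm₁).mp h
      exact ⟨m₀, hm₀, by ring, h₀⟩
    · rintro ⟨m₀, hm₀, rfl, h₀⟩
      exact ⟨2 * m₀, by omega, by ring,
        (Kone c h1 heven hodd s₀ hs₀ (2 * m₀) (by omega)).mpr ⟨m₀, hm₀, rfl, h₀⟩⟩

end ClAux

theorem minColless_eq_even_shift (c : ℕ → ℕ) (h1 : c 1 = 0)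
    (heven : ∀ n : ℕ, 1 ≤ n → c (2 * n) = 2 * c n)
    (hodd : ∀ n : ℕ, 1 ≤ n → c (2 * n + 1) = c (n + 1) + c n + 1)
    (s s₀ k : ℕ) (hk : 1 ≤ k) (hs₀ : 1 ≤ s₀) (hs : s = 2 ^ k * s₀) :
    ∀ m : ℕ, 1 ≤ m →
      (c (m + s) + c m + s = c (2 * m + s) ↔
        ∃ m₀ : ℕ, 1 ≤ m₀ ∧ m = 2 ^ k * m₀ ∧
          c (m₀ + s₀) + c m₀ + s₀ = c (2 * m₀ + s₀)) := by
  intro m hm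
  subst hs
  rw [← Fzero_iff c, mainF c h1 heven hodd k hk s₀ hs₀ m hm]
  constructor <;> rintro ⟨m₀, a, b, h⟩ <;>
    exact ⟨m₀, a, b, by rw [← Fzero_iff c] at * <;> assumption⟩
end

section
/- Define c : ℕ → ℕ by c(1) = 0, c(2n) = 2·c(n), c(2n+1) = c(n+1) + c(n) + 1. Let s = 2^{j+1} − (2t+1) be odd, with j = ⌊log₂ s⌋ and 0 ≤ t < 2^{j−1}. Then for every m ≥ 1, c(2m+s) + c(2m) + s = c(4m+s) holds if and only if m = 2^j·p for some p ≥ 1. -/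
private lemma mod_two_mul_add_one (a b : ℕ) (hb : 0 < b) :
    (2*a+1) % (2*b) = 2*(a % b) + 1 := by
  have h1 : a % b < b := Nat.mod_lt _ hb
  have h2 : (2*a) % (2*b) = 2*(a%b) := Nat.mul_mod_mul_left 2 a b
  have h3 : 1 % (2*b) = 1 := Nat.mod_eq_of_lt (by omega)
  calc (2*a+1) % (2*b) = ((2*a)%(2*b) + 1%(2*b)) % (2*b) := by rw [Nat.add_mod]
    _ = (2*(a%b)+1) % (2*b) := by rw [h2, h3]
    _ = 2*(a%b)+1 := Nat.mod_eq_of_lt (by omega)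

private lemma mod_succ (a b : ℕ) (hb : 0 < b) :
    (a % b + 1 < b ∧ (a+1) % b = a % b + 1) ∨ (a % b + 1 = b ∧ (a+1) % b = 0) := by
  have h1 : a % b < b := Nat.mod_lt _ hb
  by_cases hb1 : b = 1
  · subst hb1; right; simp [Nat.mod_one]
  · have h2 : (a+1) % b = (a % b + 1) % b := by
      conv_lhs => rw [Nat.add_mod, Nat.mod_eq_of_lt (show 1 < b by omega)]
    by_cases h : a % b + 1 < b
    · exact Or.inl ⟨h, by rw [h2, Nat.mod_eq_of_lt h]⟩
    · have he : a % b + 1 = b := by omega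
      exact Or.inr ⟨he, by rw [h2, he, Nat.mod_self]⟩

private lemma exists_K : ∀ w : ℕ, 1 ≤ w → ∃ K : ℕ, w ≤ 2^K ∧ 2^K < 2*w := by
  intro w
  induction w with
  | zero => omega
  | succ v ih =>
    intro _
    by_cases hv : v = 0
    · subst hv; exact ⟨0, by norm_num⟩
    · obtain ⟨K, hK1, hK2⟩ := ih (by omega)
      by_cases h : v + 1 ≤ 2^K
      · exact ⟨K, h, by omega⟩
      · have hp : (2:ℕ)^(K+1) = 2*2^K := by ring
        exact ⟨K+1, by omega, by omega⟩

private lemma cP (c : ℕ → ℕ) (h1 : c 1 = 0)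
    (heven : ∀ n : ℕ, 1 ≤ n → c (2 * n) = 2 * c n)
    (hodd : ∀ n : ℕ, 1 ≤ n → c (2 * n + 1) = c (n + 1) + c n + 1) :
    ∀ m, 1 ≤ m → c (m+1) + 1 ≤ c m + m := by
  intro m
  induction m using Nat.strong_induction_on with
  | _ m ih =>
    intro hm
    have hc2 : c 2 = 0 := by have := heven 1 (by omega); norm_num at this; omega
    rcases Nat.even_or_odd m with ⟨v, hv⟩ | ⟨v, hv⟩
    · have hv1 : 1 ≤ v := by omega
      have hE : c (2*v) = 2 * c v := heven v hv1
      have hO : c (2*v+1) = c (v+1) + c v + 1 := hodd v hv1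
      by_cases h2 : v = 1
      · subst h2
        have : c 3 = c 2 + c 1 + 1 := by have := hodd 1 (by omega); norm_num at this; omega
        have e : m = 2 := by omega
        subst e
        have e2 : c (2+1) = c 3 := rfl
        omega
      · have ihv := ih v (by omega) (by omega)
        have e1 : m + 1 = 2*v+1 := by omega
        have e2 : m = 2*v := by omega
        rw [e1, e2, hO, hE]
        omega
    · by_cases h0 : v = 0
      · subst h0
        have e : m = 1 := by omega
        subst e
        have e2 : c (1+1) = c 2 := rfl
        omega
      · have ihv := ih v (by omega) (by omega)
        have hO : c (2*v+1) = c (v+1) + c v + 1 := hodd v (by omega)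
        have hE : c (2*(v+1)) = 2 * c (v+1) := heven (v+1) (by omega)
        have e1 : m + 1 = 2*(v+1) := by omega
        have e2 : m = 2*v+1 := by omega
        rw [e1, e2, hE, hO]
        omega

private lemma cQ (c : ℕ → ℕ) (h1 : c 1 = 0)
    (heven : ∀ n : ℕ, 1 ≤ n → c (2 * n) = 2 * c n)
    (hodd : ∀ n : ℕ, 1 ≤ n → c (2 * n + 1) = c (n + 1) + c n + 1) :
    ∀ m, 3 ≤ m → c (m+1) + 2 ≤ c m + m := by
  intro m hm
  rcases Nat.even_or_odd m with ⟨v, hv⟩ | ⟨v, hv⟩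
  · have hv2 : 2 ≤ v := by omega
    have hO : c (2*v+1) = c (v+1) + c v + 1 := hodd v (by omega)
    have hE : c (2*v) = 2 * c v := heven v (by omega)
    have hP := cP c h1 heven hodd v (by omega)
    have e1 : m + 1 = 2*v+1 := by omega
    have e2 : m = 2*v := by omega
    rw [e1, e2, hO, hE]
    omega
  · have hv1 : 1 ≤ v := by omega
    have hO : c (2*v+1) = c (v+1) + c v + 1 := hodd v (by omega)
    have hE : c (2*(v+1)) = 2 * c (v+1) := heven (v+1) (by omega)
    have hP := cP c h1 heven hodd v (by omega)
    have e1 : m + 1 = 2*(v+1) := by omega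
    have e2 : m = 2*v+1 := by omega
    rw [e1, e2, hE, hO]
    omega

private lemma mainF_s14 (c : ℕ → ℕ) (h1 : c 1 = 0)
    (heven : ∀ n : ℕ, 1 ≤ n → c (2 * n) = 2 * c n)
    (hodd : ∀ n : ℕ, 1 ≤ n → c (2 * n + 1) = c (n + 1) + c n + 1) :
    ∀ N w n K : ℕ, w + n ≤ N → 1 ≤ w → 1 ≤ n → w ≤ 2^K → 2^K < 2*w →
      c (2*n+w) ≤ c (n+w) + c n + w ∧
      (c (n+w) + c n + w = c (2*n+w) ↔
        ((n % 2^K = 0 ∨ n % 2^K = 2^K - w) ∧ 2^K ≤ n)) := by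
  intro N
  induction N with
  | zero => intro w n K h hw hn _ _; omega
  | succ N ih =>
    intro w n K hN hw hn hK1 hK2
    by_cases hw1 : w = 1
    · subst hw1
      have hpow1 : (2:ℕ)^K = 1 := by
        have : (1:ℕ) ≤ 2^K := Nat.one_le_two_pow
        omega
      have hO : c (2*n+1) = c (n+1) + c n + 1 := hodd n hn
      rw [hpow1, hO]
      refine ⟨by omega, ?_⟩
      constructor
      · intro _
        exact ⟨Or.inl (Nat.mod_one n), hn⟩
      · intro _
        rfl
    -- now w ≥ 2, K ≥ 1
    have hw2 : 2 ≤ w := by omega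
    have hKne : K ≠ 0 := by
      rintro rfl
      norm_num at hK1
      omega
    obtain ⟨K', rfl⟩ : ∃ K', K = K'+1 := ⟨K-1, by omega⟩
    have hpow : (2:ℕ)^(K'+1) = 2*2^K' := by ring
    obtain ⟨M, hMdef⟩ : ∃ M : ℕ, (2:ℕ)^K' = M := ⟨_, rfl⟩
    have hMpos : 1 ≤ M := by rw [← hMdef]; exact Nat.one_le_two_pow
    rw [hpow, hMdef] at hK1 hK2 ⊢
    by_cases hn1 : n = 1
    · subst hn1
      have hQ := cQ c h1 heven hodd (w+1) (by omega)
      have eA : c (1+w) = c (w+1) := by rw [Nat.add_comm]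
      have eC : c (2*1+w) = c (w+1+1) := by rw [show 2*1+w = w+1+1 by ring]
      refine ⟨by omega, iff_of_false (by omega) ?_⟩
      rintro ⟨-, hx⟩
      omega
    have hn2 : 2 ≤ n := by omega
    rcases Nat.even_or_odd n with hpar | hpar
    · -- n even
      obtain ⟨n', rfl⟩ : ∃ k, n = 2*k := by rcases hpar with ⟨k, hk⟩; exact ⟨k, by omega⟩
      have hn' : 1 ≤ n' := by omega
      rcases Nat.even_or_odd w with wpar | wpar
      · -- R1 : w = 2*w'
        obtain ⟨w', rfl⟩ : ∃ k, w = 2*k := by rcases wpar with ⟨k, hk⟩; exact ⟨k, by omega⟩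
        have hw' : 1 ≤ w' := by omega
        have IH1 := ih w' n' K' (by omega) (by omega) (by omega)
          (by rw [hMdef]; omega) (by rw [hMdef]; omega)
        rw [hMdef] at IH1
        have EA : c (2*n' + 2*w') = 2 * c (n'+w') := by
          rw [show 2*n'+2*w' = 2*(n'+w') by ring, heven _ (by omega)]
        have EB : c (2*n') = 2 * c n' := heven n' (by omega)
        have EC : c (2*(2*n') + 2*w') = 2 * c (2*n'+w') := by
          rw [show 2*(2*n')+2*w' = 2*(2*n'+w') by ring, heven _ (by omega)]
        have e1 : (2*n') % (2*M) = 2*(n' % M) := Nat.mul_mod_mul_left 2 n' M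
        have hb : n' % M < M := Nat.mod_lt _ (by omega)
        constructor
        · omega
        constructor
        · intro heq
          obtain ⟨hd, hge⟩ := IH1.2.mp (by omega)
          rw [e1]
          omega
        · intro hRHS
          rw [e1] at hRHS
          have h2 := IH1.2.mpr (by omega)
          omega
      · -- R2 : w = 2*w'+1
        obtain ⟨w', rfl⟩ : ∃ k, w = 2*k+1 := by rcases wpar with ⟨k, hk⟩; exact ⟨k, by omega⟩
        have hw' : 1 ≤ w' := by omega
        have hwM : w' + 1 ≤ M := by omega
        have hMw : M ≤ 2*w' := by omega
        have IH1 := ih (w'+1) n' K' (by omega) (by omega) (by omega)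
          (by rw [hMdef]; omega) (by rw [hMdef]; omega)
        rw [hMdef, show n' + (w'+1) = n'+w'+1 by ring,
          show 2*n' + (w'+1) = 2*n'+w'+1 by ring] at IH1
        have EA : c (2*n' + (2*w'+1)) = c (n'+w'+1) + c (n'+w') + 1 := by
          rw [show 2*n'+(2*w'+1) = 2*(n'+w')+1 by ring, hodd _ (by omega)]
        have EB : c (2*n') = 2 * c n' := heven n' (by omega)
        have EC : c (2*(2*n') + (2*w'+1)) = c (2*n'+w'+1) + c (2*n'+w') + 1 := by
          rw [show 2*(2*n')+(2*w'+1) = 2*(2*n'+w')+1 by ring, hodd _ (by omega)]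
        have e1 : (2*n') % (2*M) = 2*(n' % M) := Nat.mul_mod_mul_left 2 n' M
        have hb : n' % M < M := Nat.mod_lt _ (by omega)
        by_cases hedge : M < 2*w'
        · -- generic : second component also at K'
          have IH2 := ih w' n' K' (by omega) (by omega) (by omega)
            (by rw [hMdef]; omega) (by rw [hMdef]; omega)
          rw [hMdef] at IH2
          constructor
          · omega
          constructor
          · intro heq
            obtain ⟨hd1, hge1⟩ := IH1.2.mp (by omega)
            obtain ⟨hd2, hge2⟩ := IH2.2.mp (by omega)
            rw [e1]
            omega
          · intro hRHS
            rw [e1] at hRHS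
            have h2 := IH1.2.mpr (by omega)
            have h3 := IH2.2.mpr (by omega)
            omega
        · -- edge : M = 2*w', w' = 2^(K'-1)
          have hMe : M = 2*w' := by omega
          have hK'ne : K' ≠ 0 := by rintro rfl; norm_num at hMdef; omega
          obtain ⟨K'', rfl⟩ : ∃ K'', K' = K''+1 := ⟨K'-1, by omega⟩
          have hp2 : (2:ℕ)^(K''+1) = 2*2^K'' := by ring
          have hw'pow : (2:ℕ)^K'' = w' := by omega
          have IH2 := ih w' n' K'' (by omega) (by omega) (by omega)
            (by rw [hw'pow]) (by rw [hw'pow]; omega)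
          rw [hw'pow] at IH2
          have hmm : n' % M % w' = n' % w' := Nat.mod_mod_of_dvd n' ⟨2, by omega⟩
          constructor
          · omega
          constructor
          · intro heq
            obtain ⟨hd1, hge1⟩ := IH1.2.mp (by omega)
            obtain ⟨hd2, hge2⟩ := IH2.2.mp (by omega)
            rw [e1]
            rcases hd1 with hd1 | hd1
            · omega
            · have hd1' : n' % M = w' - 1 := by omega
              by_cases hw'1 : w' = 1
              · omega
              · exfalso
                have hx : n' % w' = (w'-1) % w' := by rw [← hmm, hd1']
                have hy : (w'-1) % w' = w'-1 := Nat.mod_eq_of_lt (by omega)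
                omega
          · intro hRHS
            rw [e1] at hRHS
            have hr0 : n' % M = 0 := by omega
            have h2 := IH1.2.mpr (by omega)
            have hr2 : n' % w' = 0 := by rw [← hmm, hr0, Nat.zero_mod]
            have h3 := IH2.2.mpr (by omega)
            omega
    · -- n odd
      obtain ⟨n₀, rfl⟩ : ∃ k, n = 2*k+1 := by rcases hpar with ⟨k, hk⟩; exact ⟨k, by omega⟩
      have hn₀ : 1 ≤ n₀ := by omega
      have EB : c (2*n₀+1) = c (n₀+1) + c n₀ + 1 := hodd n₀ (by omega)
      have e1 : (2*n₀+1) % (2*M) = 2*(n₀ % M) + 1 := mod_two_mul_add_one n₀ M (by omega)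
      have hb : n₀ % M < M := Nat.mod_lt _ (by omega)
      have hb2 : (n₀+1) % M < M := Nat.mod_lt _ (by omega)
      have hmsucc := mod_succ n₀ M (by omega)
      have hw4 : w % 4 = 0 ∨ w % 4 = 1 ∨ w % 4 = 2 ∨ w % 4 = 3 := by omega
      rcases hw4 with h4 | h4 | h4 | h4
      · -- R3 : w = 4*ω
        obtain ⟨ω, rfl⟩ : ∃ k, w = 4*k := ⟨w/4, by omega⟩
        have hω : 1 ≤ ω := by omega
        have hK'ne : K' ≠ 0 := by rintro rfl; norm_num at hMdef; omega
        obtain ⟨K'', rfl⟩ : ∃ K'', K' = K''+1 := ⟨K'-1, by omega⟩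
        have hp2 : (2:ℕ)^(K''+1) = 2*2^K'' := by ring
        obtain ⟨M₂, hM₂⟩ : ∃ x:ℕ, (2:ℕ)^K'' = x := ⟨_, rfl⟩
        have hMM₂ : M = 2*M₂ := by omega
        have IH1 := ih (2*ω) n₀ (K''+1) (by omega) (by omega) (by omega)
          (by rw [hMdef]; omega) (by rw [hMdef]; omega)
        have IH2 := ih (2*ω) (n₀+1) (K''+1) (by omega) (by omega) (by omega)
          (by rw [hMdef]; omega) (by rw [hMdef]; omega)
        rw [hMdef] at IH1 IH2
        rw [show n₀+1+2*ω = n₀+2*ω+1 by ring] at IH2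
        have EA : c (2*n₀+1 + 4*ω) = c (n₀+2*ω+1) + c (n₀+2*ω) + 1 := by
          rw [show 2*n₀+1+4*ω = 2*(n₀+2*ω)+1 by ring, hodd _ (by omega)]
        have EC : c (2*(2*n₀+1) + 4*ω) = 2*(c (n₀+ω+1) + c (n₀+ω) + 1) := by
          rw [show 2*(2*n₀+1)+4*ω = 2*(2*n₀+2*ω+1) by ring, heven _ (by omega),
            show 2*n₀+2*ω+1 = 2*(n₀+ω)+1 by ring, hodd _ (by omega)]
        have ED : c (2*n₀+2*ω) = 2*c (n₀+ω) := by
          rw [show 2*n₀+2*ω = 2*(n₀+ω) by ring, heven _ (by omega)]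
        have EE : c (2*(n₀+1)+2*ω) = 2*c (n₀+ω+1) := by
          rw [show 2*(n₀+1)+2*ω = 2*(n₀+ω+1) by ring, heven _ (by omega)]
        constructor
        · omega
        constructor
        · intro heq
          exfalso
          obtain ⟨hd1, hge1⟩ := IH1.2.mp (by omega)
          obtain ⟨hd2, hge2⟩ := IH2.2.mp (by omega)
          rcases hmsucc with ⟨hs1, hs2⟩ | ⟨hs1, hs2⟩ <;> omega
        · intro hRHS
          exfalso
          rw [e1] at hRHS
          omega
      · -- R4 : w = 4*ω+1
        obtain ⟨ω, rfl⟩ : ∃ k, w = 4*k+1 := ⟨w/4, by omega⟩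
        have hω : 1 ≤ ω := by omega
        have h2ω1M : 2*ω+1 ≤ M := by omega
        have hM4ω : M ≤ 4*ω := by omega
        have hK'ne : K' ≠ 0 := by rintro rfl; norm_num at hMdef; omega
        obtain ⟨K'', rfl⟩ : ∃ K'', K' = K''+1 := ⟨K'-1, by omega⟩
        have hp2 : (2:ℕ)^(K''+1) = 2*2^K'' := by ring
        obtain ⟨M₂, hM₂⟩ : ∃ x:ℕ, (2:ℕ)^K'' = x := ⟨_, rfl⟩
        have hMM₂ : M = 2*M₂ := by omega
        have hM₂2 : 2 ≤ M₂ := by omega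
        have IH1 := ih (2*ω+1) n₀ (K''+1) (by omega) (by omega) (by omega)
          (by rw [hMdef]; omega) (by rw [hMdef]; omega)
        rw [hMdef, show n₀+(2*ω+1) = n₀+2*ω+1 by ring,
          show 2*n₀+(2*ω+1) = 2*n₀+2*ω+1 by ring] at IH1
        have EA : c (2*n₀+1 + (4*ω+1)) = 2 * c (n₀+2*ω+1) := by
          rw [show 2*n₀+1+(4*ω+1) = 2*(n₀+2*ω+1) by ring, heven _ (by omega)]
        have EC : c (2*(2*n₀+1) + (4*ω+1)) = 2*c (n₀+ω+1) + (c (n₀+ω+1) + c (n₀+ω) + 1) + 1 := by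
          rw [show 2*(2*n₀+1)+(4*ω+1) = 2*(2*n₀+2*ω+1)+1 by ring, hodd _ (by omega),
            show 2*n₀+2*ω+1+1 = 2*(n₀+ω+1) by ring, heven _ (by omega),
            show 2*n₀+2*ω+1 = 2*(n₀+ω)+1 by ring, hodd _ (by omega)]
        have ED : c (2*n₀+2*ω+1) = c (n₀+ω+1) + c (n₀+ω) + 1 := by
          rw [show 2*n₀+2*ω+1 = 2*(n₀+ω)+1 by ring, hodd _ (by omega)]
        have EE : c (2*(n₀+1)+2*ω) = 2*c (n₀+ω+1) := by
          rw [show 2*(n₀+1)+2*ω = 2*(n₀+ω+1) by ring, heven _ (by omega)]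
        by_cases hedge : M < 4*ω
        · -- generic
          have IH2 := ih (2*ω) (n₀+1) (K''+1) (by omega) (by omega) (by omega)
            (by rw [hMdef]; omega) (by rw [hMdef]; omega)
          rw [hMdef, show n₀+1+2*ω = n₀+2*ω+1 by ring] at IH2
          constructor
          · omega
          constructor
          · intro heq
            obtain ⟨hd1, hge1⟩ := IH1.2.mp (by omega)
            obtain ⟨hd2, hge2⟩ := IH2.2.mp (by omega)
            rw [e1]
            rcases hmsucc with ⟨hs1, hs2⟩ | ⟨hs1, hs2⟩ <;> omega
          · intro hRHS
            rw [e1] at hRHS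
            rcases hmsucc with ⟨hs1, hs2⟩ | ⟨hs1, hs2⟩
            · have hc1 := IH1.2.mpr (by omega)
              have hc2 := IH2.2.mpr (by omega)
              omega
            · have hc1 := IH1.2.mpr (by omega)
              have hc2 := IH2.2.mpr (by omega)
              omega
        · -- edge : M = 4*ω, M₂ = 2*ω
          have hMe : M = 4*ω := by omega
          have hM₂pow : (2:ℕ)^K'' = M₂ := hM₂
          have IH2 := ih (2*ω) (n₀+1) K'' (by omega) (by omega) (by omega)
            (by rw [hM₂pow]; omega) (by rw [hM₂pow]; omega)
          rw [hM₂pow, show n₀+1+2*ω = n₀+2*ω+1 by ring] at IH2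
          have hmm2 : (n₀+1) % M % M₂ = (n₀+1) % M₂ := Nat.mod_mod_of_dvd _ ⟨2, by omega⟩
          constructor
          · omega
          constructor
          · intro heq
            obtain ⟨hd1, hge1⟩ := IH1.2.mp (by omega)
            obtain ⟨hd2, hge2⟩ := IH2.2.mp (by omega)
            rw [e1]
            rcases hd1 with hd1 | hd1
            · exfalso
              rcases hmsucc with ⟨hs1, hs2⟩ | ⟨hs1, hs2⟩
              · have hx : (n₀+1) % M = 1 := by omega
                have hy : (n₀+1) % M₂ = 1 % M₂ := by rw [← hmm2, hx]
                rw [Nat.mod_eq_of_lt (by omega : (1:ℕ) < M₂)] at hy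
                omega
              · omega
            · omega
          · intro hRHS
            rw [e1] at hRHS
            have hr : n₀ % M = M - (2*ω+1) := by omega
            have hc1 := IH1.2.mpr (by omega)
            rcases hmsucc with ⟨hs1, hs2⟩ | ⟨hs1, hs2⟩
            · have hx : (n₀+1) % M = M₂ := by omega
              have hy : (n₀+1) % M₂ = 0 := by rw [← hmm2, hx, Nat.mod_self]
              have hc2 := IH2.2.mpr (by omega)
              omega
            · omega
      · -- R5 : w = 4*ω+2
        obtain ⟨ω, rfl⟩ : ∃ k, w = 4*k+2 := ⟨w/4, by omega⟩
        by_cases hω0 : ω = 0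
        · -- w = 2, M = 1
          subst hω0
          have hM1 : M = 1 := by omega
          subst hM1
          have EA : c (2*n₀+1 + (4*0+2)) = c (n₀+2) + c (n₀+1) + 1 := by
            rw [show 2*n₀+1+(4*0+2) = 2*(n₀+1)+1 by ring, hodd _ (by omega),
              show n₀+1+1 = n₀+2 by ring]
          have EC : c (2*(2*n₀+1) + (4*0+2)) = 2*(2*c (n₀+1)) := by
            rw [show 2*(2*n₀+1)+(4*0+2) = 2*(2*n₀+2) by ring, heven _ (by omega),
              show 2*n₀+2 = 2*(n₀+1) by ring, heven _ (by omega)]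
          have ED : c (2*n₀+2) = 2*c (n₀+1) := by
            rw [show 2*n₀+2 = 2*(n₀+1) by ring, heven _ (by omega)]
          have IH1 := (ih 2 n₀ 1 (by omega) (by omega) (by omega) (by norm_num) (by norm_num)).1
          rw [show n₀+2 = n₀+2 by rfl] at IH1
          constructor
          · omega
          · refine iff_of_false (by omega) ?_
            rintro ⟨hx, -⟩
            omega
        · -- ω ≥ 1
          have hω : 1 ≤ ω := by omega
          have hK'ne : K' ≠ 0 := by rintro rfl; norm_num at hMdef; omega
          obtain ⟨K'', rfl⟩ : ∃ K'', K' = K''+1 := ⟨K'-1, by omega⟩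
          have hp2 : (2:ℕ)^(K''+1) = 2*2^K'' := by ring
          obtain ⟨M₂, hM₂⟩ : ∃ x:ℕ, (2:ℕ)^K'' = x := ⟨_, rfl⟩
          have hMM₂ : M = 2*M₂ := by omega
          have EA : c (2*n₀+1 + (4*ω+2)) = c (n₀+2*ω+2) + c (n₀+2*ω+1) + 1 := by
            rw [show 2*n₀+1+(4*ω+2) = 2*(n₀+2*ω+1)+1 by ring, hodd _ (by omega),
              show n₀+2*ω+1+1 = n₀+2*ω+2 by ring]
          have EC : c (2*(2*n₀+1) + (4*ω+2)) = 2*(2*c (n₀+ω+1)) := by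
            rw [show 2*(2*n₀+1)+(4*ω+2) = 2*(2*n₀+2*ω+2) by ring, heven _ (by omega),
              show 2*n₀+2*ω+2 = 2*(n₀+ω+1) by ring, heven _ (by omega)]
          have ED : c (2*n₀+(2*ω+2)) = 2*c (n₀+ω+1) := by
            rw [show 2*n₀+(2*ω+2) = 2*(n₀+ω+1) by ring, heven _ (by omega)]
          have EE : c (2*(n₀+1)+2*ω) = 2*c (n₀+ω+1) := by
            rw [show 2*(n₀+1)+2*ω = 2*(n₀+ω+1) by ring, heven _ (by omega)]
          have IH1 := (ih (2*ω+2) n₀ (K''+1) (by omega) (by omega) (by omega)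
            (by rw [hMdef]; omega) (by rw [hMdef]; omega)).1
          rw [show n₀+(2*ω+2) = n₀+2*ω+2 by ring] at IH1
          obtain ⟨K₀, ha, hb'⟩ := exists_K (2*ω) (by omega)
          have IH2 := (ih (2*ω) (n₀+1) K₀ (by omega) (by omega) (by omega) ha hb').1
          rw [show n₀+1+2*ω = n₀+2*ω+1 by ring] at IH2
          constructor
          · omega
          · refine iff_of_false (by omega) ?_
            rintro ⟨hx, -⟩
            rw [e1] at hx
            omega
      · -- R6 : w = 4*ω+3
        obtain ⟨ω, rfl⟩ : ∃ k, w = 4*k+3 := ⟨w/4, by omega⟩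
        have EA : c (2*n₀+1 + (4*ω+3)) = 2 * c (n₀+2*ω+2) := by
          rw [show 2*n₀+1+(4*ω+3) = 2*(n₀+2*ω+2) by ring, heven _ (by omega)]
        have EC : c (2*(2*n₀+1) + (4*ω+3)) = c (n₀+ω+2) + c (n₀+ω+1) + 1 + 2*c (n₀+ω+1) + 1 := by
          rw [show 2*(2*n₀+1)+(4*ω+3) = 2*(2*n₀+2*ω+2)+1 by ring, hodd _ (by omega),
            show 2*n₀+2*ω+2+1 = 2*(n₀+ω+1)+1 by ring, hodd _ (by omega),
            show n₀+ω+1+1 = n₀+ω+2 by ring,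
            show 2*n₀+2*ω+2 = 2*(n₀+ω+1) by ring, heven _ (by omega)]
        have ED : c (2*n₀+(2*ω+2)) = 2*c (n₀+ω+1) := by
          rw [show 2*n₀+(2*ω+2) = 2*(n₀+ω+1) by ring, heven _ (by omega)]
        have h2ω2M : 2*ω+2 ≤ M := by omega
        have IH1 := ih (2*ω+2) n₀ (K') (by omega) (by omega) (by omega)
          (by rw [hMdef]; omega) (by rw [hMdef]; omega)
        rw [hMdef, show n₀+(2*ω+2) = n₀+2*ω+2 by ring] at IH1
        by_cases hω0 : ω = 0
        · -- w = 3, M = 2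
          subst hω0
          have hM2 : M = 2 := by omega
          subst hM2
          simp only [Nat.mul_zero, Nat.add_zero, Nat.zero_add] at EA EC ED IH1 ⊢
          have EE : c (2*(n₀+1)+1) = c (n₀+2) + c (n₀+1) + 1 := by
            rw [hodd _ (by omega), show n₀+1+1 = n₀+2 by ring]
          constructor
          · omega
          constructor
          · intro heq
            obtain ⟨hd1, hge1⟩ := IH1.2.mp (by omega)
            rw [e1]
            omega
          · intro hRHS
            rw [e1] at hRHS
            have hc1 := IH1.2.mpr (by omega)
            omega
        · -- ω ≥ 1, w ≥ 7
          have hω : 1 ≤ ω := by omega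
          have hK'ne : K' ≠ 0 := by rintro rfl; norm_num at hMdef; omega
          obtain ⟨K'', rfl⟩ : ∃ K'', K' = K''+1 := ⟨K'-1, by omega⟩
          have hp2 : (2:ℕ)^(K''+1) = 2*2^K'' := by ring
          obtain ⟨M₂, hM₂⟩ : ∃ x:ℕ, (2:ℕ)^K'' = x := ⟨_, rfl⟩
          have hMM₂ : M = 2*M₂ := by omega
          have hM₂2 : 2 ≤ M₂ := by omega
          have hK''ne : K'' ≠ 0 := by rintro rfl; norm_num at hM₂; omega
          obtain ⟨K₃, rfl⟩ : ∃ x, K'' = x+1 := ⟨K''-1, by omega⟩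
          have hp3 : (2:ℕ)^(K₃+1) = 2*2^K₃ := by ring
          obtain ⟨M₄, hM₄⟩ : ∃ x:ℕ, (2:ℕ)^K₃ = x := ⟨_, rfl⟩
          have hMM₄ : M₂ = 2*M₄ := by omega
          have hMne : M ≠ 4*ω+2 := by omega
          have IH2 := ih (2*ω+1) (n₀+1) (K₃+1+1) (by omega) (by omega) (by omega)
            (by rw [hMdef]; omega) (by rw [hMdef]; omega)
          rw [hMdef, show n₀+1+(2*ω+1) = n₀+2*ω+2 by ring] at IH2
          have EE : c (2*(n₀+1)+(2*ω+1)) = c (n₀+ω+2) + c (n₀+ω+1) + 1 := by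
            rw [show 2*(n₀+1)+(2*ω+1) = 2*(n₀+ω+1)+1 by ring, hodd _ (by omega),
              show n₀+ω+1+1 = n₀+ω+2 by ring]
          constructor
          · omega
          constructor
          · intro heq
            obtain ⟨hd1, hge1⟩ := IH1.2.mp (by omega)
            obtain ⟨hd2, hge2⟩ := IH2.2.mp (by omega)
            rw [e1]
            rcases hmsucc with ⟨hs1, hs2⟩ | ⟨hs1, hs2⟩ <;> omega
          · intro hRHS
            rw [e1] at hRHS
            rcases hmsucc with ⟨hs1, hs2⟩ | ⟨hs1, hs2⟩
            · have hc1 := IH1.2.mpr (by omega)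
              have hc2 := IH2.2.mpr (by omega)
              omega
            · have hc1 := IH1.2.mpr (by omega)
              have hc2 := IH2.2.mpr (by omega)
              omega

theorem minColless_eq_odd_even_case (c : ℕ → ℕ) (h1 : c 1 = 0)
    (heven : ∀ n : ℕ, 1 ≤ n → c (2 * n) = 2 * c n)
    (hodd : ∀ n : ℕ, 1 ≤ n → c (2 * n + 1) = c (n + 1) + c n + 1)
    (s j t : ℕ) (hsodd : Odd s) (hj : j = Nat.log 2 s)
    (hst : s + (2 * t + 1) = 2 ^ (j + 1)) (ht : t < 2 ^ (j - 1)) :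
    ∀ m : ℕ, 1 ≤ m →
      (c (2 * m + s) + c (2 * m) + s = c (4 * m + s) ↔
        ∃ p : ℕ, 1 ≤ p ∧ m = 2 ^ j * p) := by
  intro m hm
  by_cases hj0 : j = 0
  · subst hj0
    have hs1 : s = 1 := by norm_num at hst; omega
    subst hs1
    have hO : c (2*(2*m)+1) = c (2*m+1) + c (2*m) + 1 := hodd (2*m) (by omega)
    rw [show 4*m+1 = 2*(2*m)+1 by ring, hO]
    constructor
    · intro _
      exact ⟨m, hm, by simp⟩
    · intro _
      rfl
  · have hj1 : 1 ≤ j := by omega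
    obtain ⟨j', rfl⟩ : ∃ j', j = j'+1 := ⟨j-1, by omega⟩
    have hp1 : (2:ℕ)^(j'+1+1) = 2*2^(j'+1) := by ring
    have hp2 : (2:ℕ)^(j'+1) = 2*2^j' := by ring
    have ht' : t < 2^j' := ht
    rw [hp1] at hst
    have hs2t : 2*t+1 < s := by omega
    have hs1 : 1 ≤ s := by omega
    have H := mainF_s14 c h1 heven hodd (s + 2*m) s (2*m) (j'+1+1) (le_refl _) hs1 (by omega)
      (by rw [hp1]; omega) (by rw [hp1]; omega)
    rw [show 2*(2*m)+s = 4*m+s by ring] at H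
    rw [H.2, hp1]
    have e1 : (2*m) % (2*(2^(j'+1))) = 2*(m % 2^(j'+1)) := Nat.mul_mod_mul_left _ _ _
    rw [e1]
    constructor
    · rintro ⟨hd, hge⟩
      have hdvd : m % 2^(j'+1) = 0 := by omega
      have hdm := Nat.div_add_mod m (2^(j'+1))
      refine ⟨m / 2^(j'+1), ?_, ?_⟩
      · rcases Nat.eq_zero_or_pos (m / 2^(j'+1)) with h0 | h0
        · rw [h0] at hdm
          omega
        · omega
      · omega
    · rintro ⟨p, hp, rfl⟩
      have hmod : (2^(j'+1)*p) % 2^(j'+1) = 0 := Nat.mul_mod_right _ _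
      have hle : 2^(j'+1) ≤ 2^(j'+1)*p := Nat.le_mul_of_pos_right _ (by omega)
      exact ⟨Or.inl (by omega), by omega⟩
end

section
/- Define c : ℕ → ℕ by c(1) = 0, c(2n) = 2·c(n), c(2n+1) = c(n+1) + c(n) + 1. Let s = 2^{j+1} − (2t+1) be odd, with j = ⌊log₂ s⌋ and 0 ≤ t < 2^{j−1}. Then for every m ≥ 0, c(2m+1+s) + c(2m+1) + s = c(4m+2+s) holds if and only if either m = 2^j·p + t for some p ≥ 1, or s = 1 and m = 0. -/
private lemma aux_succ_mod (a K : ℕ) (hK : 0 < K) :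
    (a % K + 1 < K ∧ (a+1) % K = a % K + 1) ∨ (a % K + 1 = K ∧ (a+1) % K = 0) := by
  have h0 : (a+1) % K = (a % K + 1) % K := by
    conv_lhs => rw [← Nat.div_add_mod a K]
    rw [show K * (a/K) + a % K + 1 = K * (a/K) + (a % K + 1) by ring, Nat.mul_add_mod]
  have h1 : a % K < K := Nat.mod_lt _ hK
  rcases Nat.lt_or_ge (a % K + 1) K with h | h
  · exact Or.inl ⟨h, by rw [h0, Nat.mod_eq_of_lt h]⟩
  · have h2 : a % K + 1 = K := by omega
    exact Or.inr ⟨h2, by rw [h0, h2, Nat.mod_self]⟩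

private lemma aux_half_mod (a f : ℕ) (hf : 0 < f) :
    (a % (2*f) < f ∧ a % f = a % (2*f)) ∨ (f ≤ a % (2*f) ∧ a % f + f = a % (2*f)) := by
  have h0 : a % f = (a % (2*f)) % f := (Nat.mod_mod_of_dvd a ⟨2, by ring⟩).symm
  have h1 : a % (2*f) < 2*f := Nat.mod_lt _ (by omega)
  rcases Nat.lt_or_ge (a % (2*f)) f with h | h
  · exact Or.inl ⟨h, by rw [h0, Nat.mod_eq_of_lt h]⟩
  · refine Or.inr ⟨h, ?_⟩
    rw [h0, Nat.mod_eq_sub_mod h, Nat.mod_eq_of_lt (by omega)]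
    omega

private lemma aux_odd_mod (a K : ℕ) (hK : 0 < K) :
    (2*a+1) % (2*K) = 2*(a % K) + 1 := by
  conv_lhs => rw [← Nat.div_add_mod a K]
  rw [show 2*(K * (a/K) + a % K)+1 = (2*K) * (a/K) + (2*(a % K)+1) by ring, Nat.mul_add_mod]
  exact Nat.mod_eq_of_lt (by have := Nat.mod_lt a hK; omega)

private lemma aux_Dbound (c : ℕ → ℕ) (h1 : c 1 = 0)
    (heven : ∀ n : ℕ, 1 ≤ n → c (2 * n) = 2 * c n)
    (hodd : ∀ n : ℕ, 1 ≤ n → c (2 * n + 1) = c (n + 1) + c n + 1) :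
    ∀ b, 1 ≤ b → c (b+1) + 1 ≤ c b + b := by
  intro b
  induction b using Nat.strong_induction_on with
  | _ b ih =>
    intro hb
    rcases Nat.even_or_odd b with h | h
    · obtain ⟨y, rfl⟩ : ∃ y, b = 2*y := by obtain ⟨z, hz⟩ := h; exact ⟨z, by omega⟩
      have hy : 1 ≤ y := by omega
      have hD := ih y (by omega) hy
      have h3 := hodd y hy
      have h4 := heven y hy
      omega
    · obtain ⟨y, rfl⟩ := h
      rcases Nat.eq_zero_or_pos y with rfl | hy
      · norm_num
        have h4 : c 2 = 2 * c 1 := by have := heven 1 le_rfl; norm_num at this; exact this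
        omega
      · have hD := ih y (by omega) hy
        have h3 := hodd y hy
        have h4 : c (2*y+2) = 2 * c (y+1) := by
          rw [show 2*y+2 = 2*(y+1) from by ring]; exact heven _ (by omega)
        rw [show 2*y+1+1 = 2*y+2 from by ring]
        omega

private lemma aux_Dstrict (c : ℕ → ℕ) (h1 : c 1 = 0)
    (heven : ∀ n : ℕ, 1 ≤ n → c (2 * n) = 2 * c n)
    (hodd : ∀ n : ℕ, 1 ≤ n → c (2 * n + 1) = c (n + 1) + c n + 1) :
    ∀ b, 3 ≤ b → c (b+1) + 2 ≤ c b + b := by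
  intro b hb
  rcases Nat.even_or_odd b with h | h
  · obtain ⟨y, rfl⟩ : ∃ y, b = 2*y := by obtain ⟨z, hz⟩ := h; exact ⟨z, by omega⟩
    have hy : 2 ≤ y := by omega
    have hD := aux_Dbound c h1 heven hodd y (by omega)
    have h3 := hodd y (by omega)
    have h4 := heven y (by omega)
    omega
  · obtain ⟨y, rfl⟩ := h
    have hy : 1 ≤ y := by omega
    have hD := aux_Dbound c h1 heven hodd y hy
    have h3 := hodd y hy
    have h4 : c (2*y+2) = 2 * c (y+1) := by
      rw [show 2*y+2 = 2*(y+1) from by ring]; exact heven _ (by omega)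
    rw [show 2*y+1+1 = 2*y+2 from by ring]
    omega

private lemma aux_Bnd (c : ℕ → ℕ) (h1 : c 1 = 0)
    (heven : ∀ n : ℕ, 1 ≤ n → c (2 * n) = 2 * c n)
    (hodd : ∀ n : ℕ, 1 ≤ n → c (2 * n + 1) = c (n + 1) + c n + 1) :
    ∀ a b, 1 ≤ a → a ≤ b → c (a + b) + a ≤ c a + c b + b := by
  have H : ∀ n a b, a + b = n → 1 ≤ a → a ≤ b → c (a+b) + a ≤ c a + c b + b := by
    intro n
    induction n using Nat.strong_induction_on with
    | _ n ih =>
      intro a b hn ha hab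
      rcases eq_or_lt_of_le hab with rfl | hlt
      · rw [show a + a = 2*a from by ring, heven a ha]; omega
      · rcases Nat.lt_or_ge a 2 with h2 | h2
        · -- a = 1
          have haa : a = 1 := by omega
          subst haa
          have hD := aux_Dbound c h1 heven hodd b (by omega)
          rw [show 1 + b = b + 1 from by ring, h1]
          omega
        · rcases Nat.even_or_odd a with hea | hoa <;> rcases Nat.even_or_odd b with heb | hob
          · obtain ⟨x, rfl⟩ : ∃ x, a = 2*x := by obtain ⟨z, hz⟩ := hea; exact ⟨z, by omega⟩
            obtain ⟨y, rfl⟩ : ∃ y, b = 2*y := by obtain ⟨z, hz⟩ := heb; exact ⟨z, by omega⟩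
            have hI := ih (x+y) (by omega) x y rfl (by omega) (by omega)
            have h4 : c (2*x + 2*y) = 2 * c (x+y) := by
              rw [show 2*x+2*y = 2*(x+y) from by ring]; exact heven _ (by omega)
            have h5 := heven x (by omega)
            have h6 := heven y (by omega)
            omega
          · obtain ⟨x, rfl⟩ : ∃ x, a = 2*x := by obtain ⟨z, hz⟩ := hea; exact ⟨z, by omega⟩
            obtain ⟨y, rfl⟩ := hob
            have hI1 := ih (x+y) (by omega) x y rfl (by omega) (by omega)
            have hI2 := ih (x+y+1) (by omega) x (y+1) rfl (by omega) (by omega)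
            have h4 : c (2*x + (2*y+1)) = c (x+y+1) + c (x+y) + 1 := by
              rw [show 2*x+(2*y+1) = 2*(x+y)+1 from by ring]; exact hodd _ (by omega)
            have h5 := heven x (by omega)
            have h6 := hodd y (by omega)
            rw [show x+(y+1) = x+y+1 from by ring] at hI2
            omega
          · obtain ⟨x, rfl⟩ := hoa
            obtain ⟨y, rfl⟩ : ∃ y, b = 2*y := by obtain ⟨z, hz⟩ := heb; exact ⟨z, by omega⟩
            have hI1 := ih (x+y) (by omega) x y rfl (by omega) (by omega)
            have hI2 := ih (x+y+1) (by omega) (x+1) y (by ring) (by omega) (by omega)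
            have h4 : c (2*x+1 + 2*y) = c (x+y+1) + c (x+y) + 1 := by
              rw [show 2*x+1+2*y = 2*(x+y)+1 from by ring]; exact hodd _ (by omega)
            have h5 := hodd x (by omega)
            have h6 := heven y (by omega)
            rw [show x+1+y = x+y+1 from by ring] at hI2
            omega
          · obtain ⟨x, rfl⟩ := hoa
            obtain ⟨y, rfl⟩ := hob
            have hI1 := ih (x+y+1) (by omega) x (y+1) rfl (by omega) (by omega)
            have hI2 := ih (x+y+1) (by omega) (x+1) y (by ring) (by omega) (by omega)
            have h4 : c (2*x+1 + (2*y+1)) = 2 * c (x+y+1) := by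
              rw [show 2*x+1+(2*y+1) = 2*(x+y+1) from by ring]; exact heven _ (by omega)
            have h5 := hodd x (by omega)
            have h6 := hodd y (by omega)
            rw [show x+(y+1) = x+y+1 from by ring] at hI1
            rw [show x+1+y = x+y+1 from by ring] at hI2
            omega
  intro a b ha hab
  exact H (a+b) a b rfl ha hab
private lemma aux_P (c : ℕ → ℕ) (h1 : c 1 = 0)
    (heven : ∀ n : ℕ, 1 ≤ n → c (2 * n) = 2 * c n)
    (hodd : ∀ n : ℕ, 1 ≤ n → c (2 * n + 1) = c (n + 1) + c n + 1) :
    ∀ e k m, 1 ≤ e → e ≤ 2^k → 2^k < 2*e → 1 ≤ m →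
      (c (m + (m+e)) + m = c m + c (m+e) + (m+e) ↔
        (2^k ≤ m ∧ (m % 2^k = 0 ∨ m % 2^k + e = 2^k))) := by
  intro e
  induction e using Nat.strong_induction_on with
  | _ e ih =>
    intro k m he1 hek hke hm
    rcases Nat.lt_or_ge e 2 with he2 | he2
    · -- e = 1
      have he' : e = 1 := by omega
      subst he'
      have hk0 : k = 0 := by
        by_contra hh
        have h2 : (2:ℕ)^1 ≤ 2^k := Nat.pow_le_pow_right (by norm_num) (by omega)
        norm_num at h2
        omega
      subst hk0
      have e0 : (2:ℕ)^0 = 1 := by norm_num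
      have hmod : m % 2^0 = 0 := by rw [pow_zero]; exact Nat.mod_one m
      have hc : c (m + (m+1)) = c (m+1) + c m + 1 := by
        rw [show m + (m+1) = 2*m+1 from by ring]; exact hodd m hm
      omega
    · -- 2 ≤ e
      have hk1 : 1 ≤ k := by
        by_contra hh
        have hk0 : k = 0 := by omega
        rw [hk0] at hek
        norm_num at hek
        omega
      have hKK : (2:ℕ)^k = 2*2^(k-1) := by
        have h := pow_succ 2 (k-1)
        rw [show k-1+1 = k from by omega] at h
        omega
      have hK1 : 0 < 2^(k-1) := pow_pos (by norm_num) _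
      rcases Nat.lt_or_ge m 2 with hm2 | hm2
      · -- m = 1
        have hm' : m = 1 := by omega
        subst hm'
        have hD := aux_Dstrict c h1 heven hodd (e+1) (by omega)
        rw [show e+1+1 = e+2 from by ring] at hD
        have hc : c (1 + (1+e)) = c (e+2) := by rw [show 1 + (1+e) = e+2 from by ring]
        have hc2 : c (1+e) = c (e+1) := by rw [show 1+e = e+1 from by ring]
        constructor
        · intro heq; exfalso; omega
        · rintro ⟨hk2, _⟩; exfalso
          have h2 : (2:ℕ)^1 ≤ 2^k := Nat.pow_le_pow_right (by norm_num) hk1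
          norm_num at h2; omega
      · rcases Nat.even_or_odd m with hem | hom <;> rcases Nat.even_or_odd e with hee | hoe
        · -- m even, e even
          obtain ⟨a, rfl⟩ : ∃ a, m = 2*a := by obtain ⟨z, hz⟩ := hem; exact ⟨z, by omega⟩
          obtain ⟨f, rfl⟩ : ∃ f, e = 2*f := by obtain ⟨z, hz⟩ := hee; exact ⟨z, by omega⟩
          have ha1 : 1 ≤ a := by omega
          have hf1 : 1 ≤ f := by omega
          have hIH := ih f (by omega) (k-1) a hf1 (by omega) (by omega) ha1
          have hc1 : c (2*a + (2*a + 2*f)) = 2 * c (a + (a + f)) := by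
            rw [show 2*a + (2*a+2*f) = 2*(a+(a+f)) from by ring]; exact heven _ (by omega)
          have hc2 : c (2*a) = 2 * c a := heven a ha1
          have hc3 : c (2*a + 2*f) = 2 * c (a + f) := by
            rw [show 2*a+2*f = 2*(a+f) from by ring]; exact heven _ (by omega)
          have hmod : 2*a % 2^k = 2 * (a % 2^(k-1)) := by
            rw [hKK]; exact Nat.mul_mod_mul_left 2 a _
          have hlt : a % 2^(k-1) < 2^(k-1) := Nat.mod_lt _ hK1
          omega
        · -- m even, e odd
          obtain ⟨a, rfl⟩ : ∃ a, m = 2*a := by obtain ⟨z, hz⟩ := hem; exact ⟨z, by omega⟩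
          obtain ⟨f, rfl⟩ := hoe
          have ha1 : 1 ≤ a := by omega
          have hf1 : 1 ≤ f := by omega
          have h2f2 : 2*f+2 ≤ 2^k := by omega
          have hIH1 := ih (f+1) (by omega) (k-1) a (by omega) (by omega) (by omega) ha1
          rw [show a + (a + (f+1)) = 2*a+f+1 from by ring] at hIH1
          rw [show a + (f+1) = a+f+1 from by ring] at hIH1
          have hB1 := aux_Bnd c h1 heven hodd a (a+f) ha1 (by omega)
          have hB2 := aux_Bnd c h1 heven hodd a (a+f+1) ha1 (by omega)
          rw [show a + (a+f) = 2*a+f from by ring] at hB1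
          rw [show a + (a+f+1) = 2*a+f+1 from by ring] at hB2
          have hc1 : c (2*a + (2*a + (2*f+1))) = c (2*a+f+1) + c (2*a+f) + 1 := by
            rw [show 2*a + (2*a+(2*f+1)) = 2*(2*a+f)+1 from by ring]; exact hodd _ (by omega)
          have hc2 : c (2*a) = 2 * c a := heven a ha1
          have hc3 : c (2*a + (2*f+1)) = c (a+f+1) + c (a+f) + 1 := by
            rw [show 2*a+(2*f+1) = 2*(a+f)+1 from by ring]; exact hodd _ (by omega)
          have hmod : 2*a % 2^k = 2 * (a % 2^(k-1)) := by
            rw [hKK]; exact Nat.mul_mod_mul_left 2 a _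
          have hlt : a % 2^(k-1) < 2^(k-1) := Nat.mod_lt _ hK1
          by_cases hgen : 2^(k-1) < 2*f
          · have hIH2 := ih f (by omega) (k-1) a hf1 (by omega) hgen ha1
            rw [show a + (a+f) = 2*a+f from by ring] at hIH2
            omega
          · have hsp : (2:ℕ)^(k-1) = 2*f := by omega
            have hk2 : 2 ≤ k := by
              by_contra hh
              have hk0 : k = 1 := by omega
              rw [hk0] at hsp
              norm_num at hsp
              omega
            have hKK2 : (2:ℕ)^(k-1) = 2*2^(k-2) := by
              have h := pow_succ 2 (k-2)
              rw [show k-2+1 = k-1 from by omega] at h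
              omega
            have hsp2 : (2:ℕ)^(k-2) = f := by omega
            have hIH2 := ih f (by omega) (k-2) a hf1 (by omega) (by omega) ha1
            rw [show a + (a+f) = 2*a+f from by ring, hsp2] at hIH2
            have hhalf := aux_half_mod a f hf1
            rw [← hsp] at hhalf
            have hlt2 : a % f < f := Nat.mod_lt _ (by omega)
            omega
        · -- m odd, e even
          obtain ⟨a, rfl⟩ := hom
          obtain ⟨f, rfl⟩ : ∃ f, e = 2*f := by obtain ⟨z, hz⟩ := hee; exact ⟨z, by omega⟩
          have ha1 : 1 ≤ a := by omega
          have hf1 : 1 ≤ f := by omega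
          have hB1 := aux_Bnd c h1 heven hodd a (a+f+1) ha1 (by omega)
          have hB2 := aux_Bnd c h1 heven hodd (a+1) (a+f) (by omega) (by omega)
          rw [show a + (a+f+1) = 2*a+f+1 from by ring] at hB1
          rw [show a+1 + (a+f) = 2*a+f+1 from by ring] at hB2
          have hc1 : c (2*a+1 + (2*a+1 + 2*f)) = 2 * c (2*a+f+1) := by
            rw [show 2*a+1 + (2*a+1+2*f) = 2*(2*a+f+1) from by ring]; exact heven _ (by omega)
          have hc2 : c (2*a+1) = c (a+1) + c a + 1 := hodd a ha1
          have hc3 : c (2*a+1 + 2*f) = c (a+f+1) + c (a+f) + 1 := by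
            rw [show 2*a+1+2*f = 2*(a+f)+1 from by ring]; exact hodd _ (by omega)
          have hmod : (2*a+1) % 2^k = 2 * (a % 2^(k-1)) + 1 := by
            rw [hKK]; exact aux_odd_mod a _ hK1
          have hlt : a % 2^(k-1) < 2^(k-1) := Nat.mod_lt _ hK1
          omega
        · -- m odd, e odd
          obtain ⟨a, rfl⟩ := hom
          obtain ⟨f, rfl⟩ := hoe
          have ha1 : 1 ≤ a := by omega
          have hf1 : 1 ≤ f := by omega
          have h2f2 : 2*f+2 ≤ 2^k := by omega
          have hIH1 := ih (f+1) (by omega) (k-1) a (by omega) (by omega) (by omega) ha1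
          rw [show a + (a + (f+1)) = 2*a+f+1 from by ring] at hIH1
          rw [show a + (f+1) = a+f+1 from by ring] at hIH1
          have hB1 := aux_Bnd c h1 heven hodd a (a+f+1) ha1 (by omega)
          have hB2 := aux_Bnd c h1 heven hodd (a+1) (a+f+1) (by omega) (by omega)
          rw [show a + (a+f+1) = 2*a+f+1 from by ring] at hB1
          rw [show a+1 + (a+f+1) = 2*a+f+2 from by ring] at hB2
          have hc1 : c (2*a+1 + (2*a+1 + (2*f+1))) = c (2*a+f+2) + c (2*a+f+1) + 1 := by
            rw [show 2*a+1 + (2*a+1+(2*f+1)) = 2*(2*a+f+1)+1 from by ring, hodd _ (by omega),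
               show 2*a+f+1+1 = 2*a+f+2 from by ring]
          have hc2 : c (2*a+1) = c (a+1) + c a + 1 := hodd a ha1
          have hc3 : c (2*a+1 + (2*f+1)) = 2 * c (a+f+1) := by
            rw [show 2*a+1+(2*f+1) = 2*(a+f+1) from by ring]; exact heven _ (by omega)
          have hmod : (2*a+1) % 2^k = 2 * (a % 2^(k-1)) + 1 := by
            rw [hKK]; exact aux_odd_mod a _ hK1
          have hlt : a % 2^(k-1) < 2^(k-1) := Nat.mod_lt _ hK1
          have hsucc := aux_succ_mod a (2^(k-1)) hK1
          by_cases hgen : 2^(k-1) < 2*f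
          · have hIH2 := ih f (by omega) (k-1) (a+1) hf1 (by omega) hgen (by omega)
            rw [show a+1 + (a+1+f) = 2*a+f+2 from by ring] at hIH2
            rw [show a+1+f = a+f+1 from by ring] at hIH2
            have hlt3 : (a+1) % 2^(k-1) < 2^(k-1) := Nat.mod_lt _ hK1
            omega
          · have hsp : (2:ℕ)^(k-1) = 2*f := by omega
            have hk2 : 2 ≤ k := by
              by_contra hh
              have hk0 : k = 1 := by omega
              rw [hk0] at hsp
              norm_num at hsp
              omega
            have hKK2 : (2:ℕ)^(k-1) = 2*2^(k-2) := by
              have h := pow_succ 2 (k-2)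
              rw [show k-2+1 = k-1 from by omega] at h
              omega
            have hsp2 : (2:ℕ)^(k-2) = f := by omega
            have hIH2 := ih f (by omega) (k-2) (a+1) hf1 (by omega) (by omega) (by omega)
            rw [show a+1 + (a+1+f) = 2*a+f+2 from by ring] at hIH2
            rw [show a+1+f = a+f+1 from by ring] at hIH2
            rw [hsp2] at hIH2
            have hhalf := aux_half_mod (a+1) f hf1
            rw [← hsp] at hhalf
            have hlt2 : (a+1) % f < f := Nat.mod_lt _ (by omega)
            have hlt3 : (a+1) % 2^(k-1) < 2^(k-1) := Nat.mod_lt _ hK1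
            omega
theorem minColless_eq_odd_odd_case (c : ℕ → ℕ) (h1 : c 1 = 0)
    (heven : ∀ n : ℕ, 1 ≤ n → c (2 * n) = 2 * c n)
    (hodd : ∀ n : ℕ, 1 ≤ n → c (2 * n + 1) = c (n + 1) + c n + 1)
    (s j t : ℕ) (hsodd : Odd s) (hj : j = Nat.log 2 s)
    (hst : s + (2 * t + 1) = 2 ^ (j + 1)) (ht : t < 2 ^ (j - 1)) :
    ∀ m : ℕ,
      (c (2 * m + 1 + s) + c (2 * m + 1) + s = c (4 * m + 2 + s) ↔
        (∃ p : ℕ, 1 ≤ p ∧ m = 2 ^ j * p + t) ∨ (s = 1 ∧ m = 0)) := by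
  intro m
  have hpow : (2:ℕ)^(j+1) = 2*2^j := by rw [pow_succ]; ring
  have hs1 : 1 ≤ s := by omega
  have hmono : (2:ℕ)^(j-1) ≤ 2^j := Nat.pow_le_pow_right (by norm_num) (Nat.sub_le j 1)
  have ht2j : t < 2^j := lt_of_lt_of_le ht hmono
  obtain ⟨e, he⟩ : ∃ e, t + e = 2^j := ⟨2^j - t, by omega⟩
  have hse : s + 1 = 2*e := by omega
  by_cases hs_1 : s = 1
  · subst hs_1
    have hj0 : j = 0 := by
      have heq : (2:ℕ)^(j-1) = 2^j := by omega
      have h2 := Nat.pow_right_injective (le_refl 2) heq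
      omega
    subst hj0
    norm_num at hst
    have ht0 : t = 0 := by omega
    subst ht0
    have hA : c (2*m+1+1) = 2 * c (m+1) := by
      rw [show 2*m+1+1 = 2*(m+1) from by ring]; exact heven _ (by omega)
    have hBm : c (4*m+2+1) = c (2*m+1+1) + c (2*m+1) + 1 := by
      rw [show 4*m+2+1 = 2*(2*m+1)+1 from by ring]; exact hodd _ (by omega)
    constructor
    · intro _
      rcases Nat.eq_zero_or_pos m with rfl | hm
      · exact Or.inr ⟨rfl, rfl⟩
      · exact Or.inl ⟨m, hm, by norm_num⟩
    · intro _; omega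
  · have hs3 : 3 ≤ s := by omega
    have he2 : 2 ≤ e := by omega
    have hj1 : 1 ≤ j := by
      by_contra hh
      have hj0 : j = 0 := by omega
      rw [hj0] at he
      norm_num at he
      omega
    have hpow2 : (2:ℕ)^j = 2*2^(j-1) := by
      have h := pow_succ 2 (j-1)
      rw [show j-1+1 = j from by omega] at h
      omega
    have hpj : 0 < (2:ℕ)^j := pow_pos (by norm_num) _
    have hpj1 : 0 < (2:ℕ)^(j-1) := pow_pos (by norm_num) _
    have h2je : 2^j < 2*e := by omega
    rcases Nat.eq_zero_or_pos m with rfl | hm1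
    · have hD := aux_Dstrict c h1 heven hodd (s+1) (by omega)
      rw [show s+1+1 = s+2 from by ring] at hD
      have hc1 : c (2*0+1+s) = c (s+1) := by rw [show 2*0+1+s = s+1 from by ring]
      have hc2 : c (2*0+1) = c 1 := by norm_num
      have hc3 : c (4*0+2+s) = c (s+2) := by rw [show 4*0+2+s = s+2 from by ring]
      constructor
      · intro heq; exfalso; omega
      · rintro (⟨p, hp, hm0⟩ | ⟨hs, _⟩)
        · exfalso
          have hmp : 0 < 2^j * p := Nat.mul_pos hpj hp
          omega
        · exact absurd hs (by omega)
    · have hA : c (2*m+1+s) = 2 * c (m+e) := by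
        rw [show 2*m+1+s = 2*(m+e) from by omega]; exact heven _ (by omega)
      have hBm : c (2*m+1) = c (m+1) + c m + 1 := hodd m hm1
      have hC : c (4*m+2+s) = c (m+(m+e)+1) + c (m+(m+e)) + 1 := by
        rw [show 4*m+2+s = 2*(m+(m+e))+1 from by omega]; exact hodd _ (by omega)
      have hB1 := aux_Bnd c h1 heven hodd m (m+e) hm1 (by omega)
      have hB2 := aux_Bnd c h1 heven hodd (m+1) (m+e) (by omega) (by omega)
      rw [show m+1+(m+e) = m+(m+e)+1 from by ring] at hB2
      have hP1 := aux_P c h1 heven hodd e j m (by omega) (by omega) h2je hm1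
      have hsucc := aux_succ_mod m (2^j) hpj
      have hlt : m % 2^j < 2^j := Nat.mod_lt _ hpj
      have hgoal : (c (2*m+1+s) + c (2*m+1) + s = c (4*m+2+s)) ↔ (2^j ≤ m ∧ m % 2^j = t) := by
        by_cases hgen : t + 1 < 2^(j-1)
        · have hP2 := aux_P c h1 heven hodd (e-1) j (m+1) (by omega) (by omega) (by omega)
            (by omega)
          rw [show m+1+(e-1) = m+e from by omega] at hP2
          rw [show m+1+(m+e) = m+(m+e)+1 from by ring] at hP2
          omega
        · have hsp : t + 1 = 2^(j-1) := by omega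
          have hP2 := aux_P c h1 heven hodd (e-1) (j-1) (m+1) (by omega) (by omega) (by omega)
            (by omega)
          rw [show m+1+(e-1) = m+e from by omega] at hP2
          rw [show m+1+(m+e) = m+(m+e)+1 from by ring] at hP2
          have hhalf := aux_half_mod (m+1) (2^(j-1)) hpj1
          rw [show 2*2^(j-1) = 2^j from hpow2.symm] at hhalf
          have hlt2 : (m+1) % 2^(j-1) < 2^(j-1) := Nat.mod_lt _ hpj1
          omega
      rw [hgoal]
      constructor
      · rintro ⟨hma, hmb⟩
        refine Or.inl ⟨m / 2^j, ?_, ?_⟩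
        · rw [Nat.one_le_div_iff hpj]; exact hma
        · conv_lhs => rw [← Nat.div_add_mod m (2^j), hmb]
      · rintro (⟨p, hp, rfl⟩ | ⟨hs, _⟩)
        · refine ⟨?_, ?_⟩
          · calc (2:ℕ)^j = 2^j * 1 := by ring
              _ ≤ 2^j * p := Nat.mul_le_mul_left _ hp
              _ ≤ 2^j * p + t := Nat.le_add_right _ _
          · rw [Nat.mul_add_mod, Nat.mod_eq_of_lt ht2j]
        · exact absurd hs (by omega)
end

section
/- Define c : ℕ → ℕ by c(1) = 0, c(2n) = 2·c(n), c(2n+1) = c(n+1) + c(n) + 1. Let n ≥ 2, write n = 2^m + p with m = ⌊log₂ n⌋ and 0 ≤ p < 2^m, and let n_a ≥ n_b ≥ 1 with n_a + n_b = n satisfy c(n_a) + c(n_b) + n_a − n_b = c(n). Then n_a − n_b ≤ min{p, 2^m − p}. -/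
private def mu (n : ℕ) : ℕ := min (n - 2 ^ Nat.log 2 n) (2 ^ (Nat.log 2 n + 1) - n)

private lemma log2_double (s : ℕ) (hs : 1 ≤ s) : Nat.log 2 (2 * s) = Nat.log 2 s + 1 := by
  rw [mul_comm, Nat.log_mul_base (by norm_num) (by omega)]

private lemma log2_double_add_one (s : ℕ) (hs : 1 ≤ s) :
    Nat.log 2 (2 * s + 1) = Nat.log 2 s + 1 := by
  have h1 := Nat.pow_log_le_self 2 (show s ≠ 0 by omega)
  have h2 := Nat.lt_pow_succ_log_self (show 1 < 2 by norm_num) s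
  refine Nat.log_eq_of_pow_le_of_lt_pow ?_ ?_
  · rw [pow_succ]; omega
  · rw [pow_succ, pow_succ]; omega

private lemma mu_double (s : ℕ) (hs : 1 ≤ s) : mu (2 * s) = 2 * mu s := by
  unfold mu
  rw [log2_double s hs]
  have h1 := Nat.pow_log_le_self 2 (show s ≠ 0 by omega)
  have h2 := Nat.lt_pow_succ_log_self (show 1 < 2 by norm_num) s
  simp only [pow_succ]
  omega

private lemma mu_odd_left (s : ℕ) (hs : 1 ≤ s) : 2 * mu s ≤ mu (2 * s + 1) + 1 := by
  unfold mu
  rw [log2_double_add_one s hs]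
  have h1 := Nat.pow_log_le_self 2 (show s ≠ 0 by omega)
  have h2 := Nat.lt_pow_succ_log_self (show 1 < 2 by norm_num) s
  simp only [pow_succ]
  omega

private lemma mu_odd_right (s : ℕ) (hs : 1 ≤ s) : 2 * mu (s + 1) ≤ mu (2 * s + 1) + 1 := by
  have h1 := Nat.pow_log_le_self 2 (show s ≠ 0 by omega)
  have h2 := Nat.lt_pow_succ_log_self (show 1 < 2 by norm_num) s
  rcases eq_or_lt_of_le (show s + 1 ≤ 2 ^ (Nat.log 2 s + 1) by omega) with he | hl
  · have hlog : Nat.log 2 (s + 1) = Nat.log 2 s + 1 := by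
      rw [he, Nat.log_pow (by norm_num)]
    have : mu (s + 1) = 0 := by
      unfold mu
      rw [hlog, ← he]
      simp
    omega
  · have hlog : Nat.log 2 (s + 1) = Nat.log 2 s := by
      refine Nat.log_eq_of_pow_le_of_lt_pow (by omega) hl
    unfold mu
    rw [hlog, log2_double_add_one s hs]
    simp only [pow_succ]
    omega

private lemma mu_odd_parity (s : ℕ) (hs : 1 ≤ s) : mu (2 * s + 1) % 2 = 1 := by
  unfold mu
  rw [log2_double_add_one s hs]
  have h1 := Nat.pow_log_le_self 2 (show s ≠ 0 by omega)
  have h2 := Nat.lt_pow_succ_log_self (show 1 < 2 by norm_num) s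
  simp only [pow_succ]
  omega

private lemma c_le (c : ℕ → ℕ) (h1 : c 1 = 0)
    (heven : ∀ n : ℕ, 1 ≤ n → c (2 * n) = 2 * c n)
    (hodd : ∀ n : ℕ, 1 ≤ n → c (2 * n + 1) = c (n + 1) + c n + 1) :
    ∀ n, 2 ≤ n → c n ≤ n - 2 := by
  intro n
  induction n using Nat.strong_induction_on with
  | _ n IH =>
    intro hn
    obtain ⟨s, hs | hs⟩ : ∃ s, n = 2 * s ∨ n = 2 * s + 1 := ⟨n / 2, by omega⟩
    · subst hs
      have hs1 : 1 ≤ s := by omega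
      have he := heven s hs1
      rcases eq_or_lt_of_le hs1 with h | h
      · subst h; norm_num at he ⊢; omega
      · have := IH s (by omega) (by omega)
        omega
    · subst hs
      have hs1 : 1 ≤ s := by omega
      have ho := hodd s hs1
      rcases eq_or_lt_of_le hs1 with h | h
      · subst h
        have he := heven 1 le_rfl
        norm_num at he ho ⊢
        omega
      · have i1 := IH s (by omega) (by omega)
        have i2 := IH (s + 1) (by omega) (by omega)
        omega

private lemma keyQ (c : ℕ → ℕ) (h1 : c 1 = 0)
    (heven : ∀ n : ℕ, 1 ≤ n → c (2 * n) = 2 * c n)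
    (hodd : ∀ n : ℕ, 1 ≤ n → c (2 * n + 1) = c (n + 1) + c n + 1) :
    ∀ n, 2 ≤ n → ∀ a b, 1 ≤ b → b ≤ a → a + b = n →
      c n ≤ c a + c b + (a - b) ∧ (mu n < a - b → c n < c a + c b + (a - b)) := by
  intro n
  induction n using Nat.strong_induction_on with
  | _ n IH =>
  intro hn a b hb1 hba hab
  obtain ⟨s, hs | hs⟩ : ∃ s, n = 2 * s ∨ n = 2 * s + 1 := ⟨n / 2, by omega⟩
  · -- n even
    subst hs
    have hs1 : 1 ≤ s := by omega
    have he := heven s hs1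
    rcases eq_or_lt_of_le hs1 with h | hs2
    · -- n = 2 : a = b = 1
      have ha1 : a = 1 := by omega
      have hbb : b = 1 := by omega
      subst ha1 hbb
      subst h
      norm_num at he ⊢
      omega
    · -- s ≥ 2
      have hmu := mu_double s hs1
      obtain ⟨t, ht | ht⟩ : ∃ t, a = 2 * t ∨ a = 2 * t + 1 := ⟨a / 2, by omega⟩
      · -- a, b even
        subst ht
        obtain ⟨u, hu⟩ : ∃ u, b = 2 * u := ⟨b / 2, by omega⟩
        subst hu
        have hu1 : 1 ≤ u := by omega
        have hea := heven t (by omega)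
        have heb := heven u hu1
        have hI := IH s (by omega) (by omega) t u hu1 (by omega) (by omega)
        constructor
        · omega
        · intro hd
          have := hI.2 (by omega)
          omega
      · -- a, b odd
        subst ht
        obtain ⟨u, hu⟩ : ∃ u, b = 2 * u + 1 := ⟨b / 2, by omega⟩
        subst hu
        rcases Nat.eq_zero_or_pos u with hu0 | hu1
        · -- b = 1
          subst hu0
          have ht1 : 1 ≤ t := by omega
          have ho := hodd t ht1
          have hts : t + 1 = s := by omega
          rw [hts] at ho
          have hc := c_le c h1 heven hodd s (by omega)
          norm_num at *
          constructor
          · omega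
          · intro _; omega
        · -- b = 2u+1, u ≥ 1
          rcases eq_or_lt_of_le (show u ≤ t by omega) with htu | htu
          · -- a = b
            subst htu
            have hsu : s = 2 * u + 1 := by omega
            subst hsu
            constructor
            · omega
            · intro hd; omega
          · -- t > u
            have hoa := hodd t (by omega)
            have hob := hodd u hu1
            have hP1 := IH s (by omega) (by omega) (t + 1) u hu1 (by omega) (by omega)
            have hP2 := IH s (by omega) (by omega) t (u + 1) (by omega) (by omega) (by omega)
            have h1' := hP1.1
            have h2' := hP2.1
            constructor
            · omega
            · intro _; omega
  · -- n odd
    subst hs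
    have hs1 : 1 ≤ s := by omega
    have ho := hodd s hs1
    rcases eq_or_lt_of_le hs1 with h | hs2
    · -- n = 3 : a = 2, b = 1
      have ha1 : a = 2 := by omega
      have hbb : b = 1 := by omega
      subst ha1 hbb
      have hmu3 : mu (2 * s + 1) = 1 := by
        subst h
        unfold mu
        rw [show Nat.log 2 (2 * 1 + 1) = 1 from
          Nat.log_eq_of_pow_le_of_lt_pow (by norm_num) (by norm_num)]
        norm_num
      have he := heven 1 le_rfl
      subst h
      norm_num at he ho hmu3 ⊢
      omega
    · -- s ≥ 2
      have hmuL := mu_odd_left s hs1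
      have hmuR := mu_odd_right s hs1
      have hpar := mu_odd_parity s hs1
      obtain ⟨t, ht | ht⟩ : ∃ t, a = 2 * t ∨ a = 2 * t + 1 := ⟨a / 2, by omega⟩
      · -- a even, b odd
        subst ht
        obtain ⟨u, hu⟩ : ∃ u, b = 2 * u + 1 := ⟨b / 2, by omega⟩
        subst hu
        rcases Nat.eq_zero_or_pos u with hu0 | hu1
        · -- b = 1, a = 2s
          subst hu0
          have hts : t = s := by omega
          subst hts
          have he := heven t (by omega)
          have hc := c_le c h1 heven hodd (t + 1) (by omega)
          simp only [Nat.mul_zero, Nat.zero_add]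
          exact ⟨by omega, fun _ => by omega⟩
        · -- u ≥ 1, t ≥ u + 1
          have htu : u + 1 ≤ t := by omega
          have hea := heven t (by omega)
          have hob := hodd u hu1
          have hP1 := IH s (by omega) (by omega) t u hu1 (by omega) (by omega)
          have hP2 := IH (s + 1) (by omega) (by omega) t (u + 1) (by omega) (by omega) (by omega)
          have h1' := hP1.1
          have h2' := hP2.1
          constructor
          · omega
          · intro hd
            have hstrict := hP1.2 (by omega)
            omega
      · -- a odd, b even
        subst ht
        obtain ⟨u, hu⟩ : ∃ u, b = 2 * u := ⟨b / 2, by omega⟩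
        subst hu
        have hu1 : 1 ≤ u := by omega
        have htu : u ≤ t := by omega
        have hoa := hodd t (by omega)
        have heb := heven u hu1
        have hP1 := IH s (by omega) (by omega) t u hu1 htu (by omega)
        have hP2 := IH (s + 1) (by omega) (by omega) (t + 1) u hu1 (by omega) (by omega)
        have h1' := hP1.1
        have h2' := hP2.1
        constructor
        · omega
        · intro hd
          have hstrict := hP2.2 (by omega)
          omega

theorem minColless_root_balance_le (c : ℕ → ℕ) (h1 : c 1 = 0)
    (heven : ∀ n : ℕ, 1 ≤ n → c (2 * n) = 2 * c n)
    (hodd : ∀ n : ℕ, 1 ≤ n → c (2 * n + 1) = c (n + 1) + c n + 1)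
    (n m p : ℕ) (hn : 2 ≤ n) (hm : m = Nat.log 2 n)
    (hnp : n = 2 ^ m + p) (hp : p < 2 ^ m)
    (na nb : ℕ) (hba : nb ≤ na) (hb1 : 1 ≤ nb) (hab : na + nb = n)
    (hmin : c na + c nb + (na - nb) = c n) :
    na - nb ≤ min p (2 ^ m - p) := by
  by_contra hcon
  push_neg at hcon
  have hmn : mu n = min p (2 ^ m - p) := by
    unfold mu
    rw [← hm, pow_succ]
    omega
  have hQ := keyQ c h1 heven hodd n hn na nb hb1 hba hab
  have := hQ.2 (by omega)
  omega
end
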